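/- arXiv:1505.07893 — 4 statements merged into one kernel-verified Lean document; each statement's English description precedes it below -/
import Mathlib

section
/- For t > 0, the map x ↦ exp(-t·A_n)·x is injective on R^{n+2} and maps the closed simplex Δ_n = {(x_0,...,x_{n+1}) : 0 = x_0 ≤ x_1 ≤ ... ≤ x_n ≤ x_{n+1} = 1} into its interior {x ∈ Δ_n : 0 < x_1 < ... < x_n < 1}, provided n ≥ 1. -/
open Matrix

/-! ### Generic entrywise facts about the matrix exponential -/

section General

variable {m : ℕ}

/-- A crude bound on matrix entries: the sum of all absolute values. -/
noncomputable def entBound (M : Matrix (Fin m) (Fin m) ℝ) : ℝ :=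
  ∑ p : Fin m, ∑ q : Fin m, |M p q|

lemma entBound_nonneg (M : Matrix (Fin m) (Fin m) ℝ) : 0 ≤ entBound M := by
  apply Finset.sum_nonneg; intro p _; apply Finset.sum_nonneg; intro q _; positivity

lemma abs_pow_entry_le (M : Matrix (Fin m) (Fin m) ℝ) (k : ℕ) (i j : Fin m) :
    |(M ^ k) i j| ≤ (entBound M) ^ k := by
  induction k generalizing i j with
  | zero =>
    simp only [pow_zero, Matrix.one_apply]
    split_ifs <;> simp
  | succ k ih =>
    rw [pow_succ', Matrix.mul_apply]
    calc |∑ l, M i l * (M ^ k) l j| ≤ ∑ l, |M i l * (M ^ k) l j| := Finset.abs_sum_le_sum_abs _ _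
      _ ≤ ∑ l, |M i l| * (entBound M) ^ k := by
          apply Finset.sum_le_sum; intro l _
          rw [abs_mul]
          exact mul_le_mul_of_nonneg_left (ih l j) (abs_nonneg _)
      _ = (∑ l, |M i l|) * (entBound M) ^ k := by rw [Finset.sum_mul]
      _ ≤ entBound M * (entBound M) ^ k := by
          apply mul_le_mul_of_nonneg_right _ (pow_nonneg (entBound_nonneg M) k)
          exact Finset.single_le_sum (f := fun p => ∑ q : Fin m, |M p q|)
            (fun p _ => Finset.sum_nonneg fun q _ => abs_nonneg _) (Finset.mem_univ i)
      _ = (entBound M) ^ (k + 1) := (pow_succ' _ _).symm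

lemma summable_entry (M : Matrix (Fin m) (Fin m) ℝ) (i j : Fin m) :
    Summable (fun k : ℕ => ((Nat.factorial k : ℕ) : ℝ)⁻¹ * (M ^ k) i j) := by
  apply Summable.of_norm_bounded (g := fun k => (entBound M) ^ k / (Nat.factorial k))
    (Real.summable_pow_div_factorial _)
  intro k
  have hk : (0:ℝ) < (Nat.factorial k : ℝ) := by exact_mod_cast Nat.factorial_pos k
  rw [norm_mul, Real.norm_eq_abs, Real.norm_eq_abs, abs_inv, abs_of_nonneg hk.le,
    div_eq_mul_inv, mul_comm _ ((Nat.factorial k : ℝ))⁻¹]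
  exact mul_le_mul_of_nonneg_left (abs_pow_entry_le M k i j) (inv_nonneg.mpr hk.le)

lemma summable_matrix (M : Matrix (Fin m) (Fin m) ℝ) :
    Summable (fun k : ℕ => ((Nat.factorial k : ℕ) : ℝ)⁻¹ • M ^ k) := by
  have : ∀ i j, Summable (fun k : ℕ => (((Nat.factorial k : ℕ) : ℝ)⁻¹ • M ^ k) i j) := by
    intro i j
    simpa [Matrix.smul_apply, smul_eq_mul] using summable_entry M i j
  exact Pi.summable.mpr fun i => Pi.summable.mpr fun j => this i j

lemma exp_entry (M : Matrix (Fin m) (Fin m) ℝ) (i j : Fin m) :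
    NormedSpace.exp M i j = ∑' k : ℕ, ((Nat.factorial k : ℕ) : ℝ)⁻¹ * (M ^ k) i j := by
  rw [NormedSpace.exp_eq_tsum ℝ]
  show (∑' k : ℕ, ((Nat.factorial k : ℕ):ℝ)⁻¹ • M ^ k) i j = _
  erw [tsum_apply (summable_matrix M), tsum_apply (Pi.summable.mp (summable_matrix M) i)]
  rfl

lemma summable_mulVec_entry (M : Matrix (Fin m) (Fin m) ℝ) (x : Fin m → ℝ) (i : Fin m) :
    Summable (fun k : ℕ => ((Nat.factorial k : ℕ) : ℝ)⁻¹ * ((M ^ k).mulVec x i)) := by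
  have : ∀ k : ℕ, ((Nat.factorial k : ℕ) : ℝ)⁻¹ * ((M ^ k).mulVec x i)
      = ∑ l, ((Nat.factorial k : ℕ) : ℝ)⁻¹ * (M ^ k) i l * x l := by
    intro k; rw [Matrix.mulVec, dotProduct, Finset.mul_sum]; congr 1; ext l; ring
  simp_rw [this]
  exact summable_sum fun l _ => (summable_entry M i l).mul_right (x l)

lemma exp_mulVec (M : Matrix (Fin m) (Fin m) ℝ) (x : Fin m → ℝ) (i : Fin m) :
    (NormedSpace.exp M).mulVec x i
      = ∑' k : ℕ, ((Nat.factorial k : ℕ) : ℝ)⁻¹ * ((M ^ k).mulVec x i) := by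
  rw [Matrix.mulVec, dotProduct]
  have h1 : ∀ l : Fin m, NormedSpace.exp M i l * x l
      = ∑' k : ℕ, ((Nat.factorial k : ℕ) : ℝ)⁻¹ * (M ^ k) i l * x l := by
    intro l; rw [exp_entry M i l, tsum_mul_right]
  simp_rw [h1]
  rw [← Summable.tsum_finsetSum (fun l _ => (summable_entry M i l).mul_right (x l))]
  congr 1; ext k
  rw [Matrix.mulVec, dotProduct, Finset.mul_sum]
  congr 1; ext l; ring

lemma exp_smul_one (c : ℝ) :
    NormedSpace.exp (c • (1 : Matrix (Fin m) (Fin m) ℝ)) = Real.exp c • 1 := by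
  funext i j
  rw [exp_entry]
  by_cases h : i = j
  · subst h
    have : ∀ k : ℕ, ((Nat.factorial k : ℕ) : ℝ)⁻¹ * ((c • (1:Matrix (Fin m) (Fin m) ℝ)) ^ k) i i
        = ((Nat.factorial k : ℕ) : ℝ)⁻¹ * c ^ k := by
      intro k
      rw [smul_pow, one_pow, Matrix.smul_apply, Matrix.one_apply_eq, smul_eq_mul, mul_one]
    simp_rw [this]
    have hexp : Real.exp c = ∑' k : ℕ, ((Nat.factorial k : ℕ) : ℝ)⁻¹ * c ^ k := by
      rw [Real.exp_eq_exp_ℝ, NormedSpace.exp_eq_tsum ℝ]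
      simp [smul_eq_mul]
    simp [Matrix.smul_apply, Matrix.one_apply_eq, hexp]
  · have : ∀ k : ℕ, ((Nat.factorial k : ℕ) : ℝ)⁻¹ * ((c • (1:Matrix (Fin m) (Fin m) ℝ)) ^ k) i j
        = 0 := by
      intro k
      rw [smul_pow, one_pow, Matrix.smul_apply, Matrix.one_apply_ne h, smul_eq_mul, mul_zero,
        mul_zero]
    simp_rw [this]
    simp [Matrix.smul_apply, Matrix.one_apply_ne h, tsum_zero]

end General

/-- The matrix `A_n` from the paper: `(n+2) × (n+2)`, first and last rows zero,
interior row `i` (for `1 ≤ i ≤ n`) has entries `-1, 2, -1` in columns `i-1, i, i+1`. -/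
noncomputable def coarseningMatrix (n : ℕ) : Matrix (Fin (n + 2)) (Fin (n + 2)) ℝ :=
  fun i j =>
    if (i : ℕ) = 0 ∨ (i : ℕ) = n + 1 then 0
    else if j = i then 2
    else if (j : ℕ) + 1 = (i : ℕ) ∨ (i : ℕ) + 1 = (j : ℕ) then -1
    else 0

/-- The closed simplex `Δ_n` of configurations `0 = x_0 ≤ x_1 ≤ ⋯ ≤ x_n ≤ x_{n+1} = 1`. -/
def simplexDelta (n : ℕ) : Set (Fin (n + 2) → ℝ) :=
  {x | x 0 = 0 ∧ x (Fin.last (n + 1)) = 1 ∧ Monotone x}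

/-- The interior of `Δ_n`: all inequalities strict. -/
def simplexDeltaInterior (n : ℕ) : Set (Fin (n + 2) → ℝ) :=
  {x | x 0 = 0 ∧ x (Fin.last (n + 1)) = 1 ∧ StrictMono x}

/-! ### The Neumann Laplacian on increments and the intertwining relation -/

/-- The Neumann Laplacian `B_n` acting on increments. -/
noncomputable def flowB (n : ℕ) : Matrix (Fin (n + 1)) (Fin (n + 1)) ℝ :=
  fun i j =>
    if j = i then (if (i : ℕ) = 0 ∨ (i : ℕ) = n then 1 else 2)
    else if (j : ℕ) + 1 = (i : ℕ) ∨ (i : ℕ) + 1 = (j : ℕ) then -1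
    else 0

/-- `2•1 - flowB`, a nonnegative irreducible matrix. -/
noncomputable def flowM (n : ℕ) : Matrix (Fin (n + 1)) (Fin (n + 1)) ℝ :=
  fun i j =>
    if j = i then (if (i : ℕ) = 0 ∨ (i : ℕ) = n then 1 else 0)
    else if (j : ℕ) + 1 = (i : ℕ) ∨ (i : ℕ) + 1 = (j : ℕ) then 1
    else 0

/-- The increments operator. -/
def dOp {n : ℕ} (x : Fin (n + 2) → ℝ) : Fin (n + 1) → ℝ :=
  fun i => x i.succ - x i.castSucc

lemma A_mulVec_boundary {n : ℕ} (x : Fin (n + 2) → ℝ) (b : Fin (n + 2))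
    (hb : (b : ℕ) = 0 ∨ (b : ℕ) = n + 1) :
    (coarseningMatrix n).mulVec x b = 0 := by
  rw [Matrix.mulVec, dotProduct]
  apply Finset.sum_eq_zero
  intro j _
  simp only [coarseningMatrix, hb, ↓reduceIte, zero_mul]

lemma A_mulVec_interior {n : ℕ} (x : Fin (n + 2) → ℝ) (a b c : Fin (n + 2))
    (hab : (a : ℕ) + 1 = (b : ℕ)) (hbc : (b : ℕ) + 1 = (c : ℕ)) :
    (coarseningMatrix n).mulVec x b = 2 * x b - x a - x c := by
  rw [Matrix.mulVec, dotProduct]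
  have key : ∀ j : Fin (n + 2), coarseningMatrix n b j * x j
      = (if b = j then 2 * x j else 0)
        + ((if a = j then -(x j) else 0) + (if c = j then -(x j) else 0)) := by
    intro j
    have hc := c.isLt
    simp only [coarseningMatrix, Fin.ext_iff]
    split_ifs <;> first | ring1 | (exfalso; omega)
  simp_rw [key, Finset.sum_add_distrib, Finset.sum_ite_eq, Finset.mem_univ, if_true]
  ring

lemma B_mulVec_left {n : ℕ} (y : Fin (n + 1) → ℝ) (b c : Fin (n + 1))
    (hb : (b : ℕ) = 0) (hc : (c : ℕ) = 1) :
    (flowB n).mulVec y b = y b - y c := by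
  rw [Matrix.mulVec, dotProduct]
  have key : ∀ j : Fin (n + 1), flowB n b j * y j
      = (if b = j then y j else 0) + (if c = j then -(y j) else 0) := by
    intro j
    simp only [flowB, Fin.ext_iff]
    split_ifs <;> first | ring1 | (exfalso; omega)
  simp_rw [key, Finset.sum_add_distrib, Finset.sum_ite_eq, Finset.mem_univ, if_true]
  ring

lemma B_mulVec_right {n : ℕ} (y : Fin (n + 1) → ℝ) (a b : Fin (n + 1))
    (ha : (a : ℕ) + 1 = n) (hb : (b : ℕ) = n) :
    (flowB n).mulVec y b = y b - y a := by
  rw [Matrix.mulVec, dotProduct]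
  have key : ∀ j : Fin (n + 1), flowB n b j * y j
      = (if b = j then y j else 0) + (if a = j then -(y j) else 0) := by
    intro j
    simp only [flowB, Fin.ext_iff]
    split_ifs <;> first | ring1 | (exfalso; omega)
  simp_rw [key, Finset.sum_add_distrib, Finset.sum_ite_eq, Finset.mem_univ, if_true]
  ring

lemma B_mulVec_mid {n : ℕ} (y : Fin (n + 1) → ℝ) (a b c : Fin (n + 1))
    (hab : (a : ℕ) + 1 = (b : ℕ)) (hbc : (b : ℕ) + 1 = (c : ℕ)) :
    (flowB n).mulVec y b = 2 * y b - y a - y c := by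
  rw [Matrix.mulVec, dotProduct]
  have hcl := c.isLt
  have key : ∀ j : Fin (n + 1), flowB n b j * y j
      = (if b = j then 2 * y j else 0)
        + ((if a = j then -(y j) else 0) + (if c = j then -(y j) else 0)) := by
    intro j
    simp only [flowB, Fin.ext_iff]
    split_ifs <;> first | ring1 | (exfalso; omega)
  simp_rw [key, Finset.sum_add_distrib, Finset.sum_ite_eq, Finset.mem_univ, if_true]
  ring

lemma intertwine {n : ℕ} (hn : 1 ≤ n) (x : Fin (n + 2) → ℝ) :
    dOp ((coarseningMatrix n).mulVec x) = (flowB n).mulVec (dOp x) := by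
  funext i
  have hxeq : ∀ p q : Fin (n + 2), (p : ℕ) = (q : ℕ) → x p = x q := fun p q h =>
    congrArg x (Fin.ext h)
  have hil := i.isLt
  simp only [dOp]
  rcases Nat.lt_trichotomy (i : ℕ) n with hi | hi | hi
  · rcases Nat.eq_zero_or_pos (i : ℕ) with hi0 | hi0
    · -- i = 0
      have e0 : (coarseningMatrix n).mulVec x i.castSucc = 0 :=
        A_mulVec_boundary x _ (Or.inl (by simp [hi0]))
      have e1 : (coarseningMatrix n).mulVec x i.succ
          = 2 * x i.succ - x (⟨0, by omega⟩ : Fin (n + 2)) - x (⟨2, by omega⟩ : Fin (n + 2)) :=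
        A_mulVec_interior x _ _ _ (by simp [hi0]) (by simp [hi0])
      rw [e0, e1, B_mulVec_left (dOp x) i (⟨1, by omega⟩ : Fin (n + 1)) hi0 rfl]
      simp only [dOp]
      have q1 : x (⟨0, by omega⟩ : Fin (n + 2)) = x i.castSucc := hxeq _ _ (by simp [hi0])
      have q2 : x (⟨2, by omega⟩ : Fin (n + 2)) = x (Fin.succ ⟨1, by omega⟩) := hxeq _ _ (by simp)
      have q3 : x i.succ = x (Fin.castSucc (⟨1, by omega⟩ : Fin (n + 1))) := hxeq _ _ (by simp [hi0])
      linarith [q1, q2, q3]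
    · -- 0 < i < n
      have e1 : (coarseningMatrix n).mulVec x i.succ
          = 2 * x i.succ - x i.castSucc - x (⟨(i : ℕ) + 2, by omega⟩ : Fin (n + 2)) :=
        A_mulVec_interior x _ _ _ (by simp) (by simp)
      have e0 : (coarseningMatrix n).mulVec x i.castSucc
          = 2 * x i.castSucc - x (⟨(i : ℕ) - 1, by omega⟩ : Fin (n + 2)) - x i.succ :=
        A_mulVec_interior x _ _ _ (by simp; omega) (by simp)
      rw [e0, e1, B_mulVec_mid (dOp x) (⟨(i : ℕ) - 1, by omega⟩ : Fin (n + 1)) i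
        (⟨(i : ℕ) + 1, by omega⟩ : Fin (n + 1)) (by simp; omega) (by simp)]
      simp only [dOp]
      have q1 : x (Fin.succ (⟨(i : ℕ) - 1, by omega⟩ : Fin (n + 1))) = x i.castSucc :=
        hxeq _ _ (by simp; omega)
      have q2 : x (Fin.castSucc (⟨(i : ℕ) - 1, by omega⟩ : Fin (n + 1)))
          = x (⟨(i : ℕ) - 1, by omega⟩ : Fin (n + 2)) := hxeq _ _ (by simp)
      have q3 : x (Fin.succ (⟨(i : ℕ) + 1, by omega⟩ : Fin (n + 1)))
          = x (⟨(i : ℕ) + 2, by omega⟩ : Fin (n + 2)) := hxeq _ _ (by simp)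
      have q4 : x (Fin.castSucc (⟨(i : ℕ) + 1, by omega⟩ : Fin (n + 1))) = x i.succ :=
        hxeq _ _ (by simp)
      linarith [q1, q2, q3, q4]
  · -- i = n
    have e1 : (coarseningMatrix n).mulVec x i.succ = 0 :=
      A_mulVec_boundary x _ (Or.inr (by simp [hi]))
    have e0 : (coarseningMatrix n).mulVec x i.castSucc
        = 2 * x i.castSucc - x (⟨(i : ℕ) - 1, by omega⟩ : Fin (n + 2)) - x i.succ :=
      A_mulVec_interior x _ _ _ (by simp; omega) (by simp)
    rw [e0, e1, B_mulVec_right (dOp x) (⟨(i : ℕ) - 1, by omega⟩ : Fin (n + 1)) i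
      (by simp; omega) hi]
    simp only [dOp]
    have q1 : x (Fin.succ (⟨(i : ℕ) - 1, by omega⟩ : Fin (n + 1))) = x i.castSucc :=
      hxeq _ _ (by simp; omega)
    have q2 : x (Fin.castSucc (⟨(i : ℕ) - 1, by omega⟩ : Fin (n + 1)))
        = x (⟨(i : ℕ) - 1, by omega⟩ : Fin (n + 2)) := hxeq _ _ (by simp)
    linarith [q1, q2]
  · omega

/-! ### Positivity of the Neumann heat kernel -/

lemma flowM_nonneg {n : ℕ} (i j : Fin (n + 1)) : 0 ≤ flowM n i j := by
  simp only [flowM]; split_ifs <;> norm_num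

lemma flowM_pow_nonneg {n : ℕ} (k : ℕ) (i j : Fin (n + 1)) : 0 ≤ (flowM n ^ k) i j := by
  induction k generalizing i j with
  | zero => simp [Matrix.one_apply]; split_ifs <;> norm_num
  | succ k ih =>
    rw [pow_succ', Matrix.mul_apply]
    exact Finset.sum_nonneg fun l _ => mul_nonneg (flowM_nonneg i l) (ih l j)

lemma flowM_adj {n : ℕ} (i j : Fin (n + 1)) (h : (i : ℕ) + 1 = j ∨ (j : ℕ) + 1 = i) :
    flowM n i j = 1 := by
  simp only [flowM]
  split_ifs <;> first | rfl | omega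

lemma flowM_pow_pos {n : ℕ} (k : ℕ) (i j : Fin (n + 1))
    (h : (i : ℕ) + k = j ∨ (j : ℕ) + k = i) : 0 < (flowM n ^ k) i j := by
  induction k generalizing i j with
  | zero =>
    have : i = j := Fin.ext (by omega)
    subst this
    simp [Matrix.one_apply]
  | succ k ih =>
    have hjl := j.isLt
    have hil := i.isLt
    rcases h with h | h
    · have hl : (i : ℕ) + 1 < n + 1 := by omega
      set l : Fin (n + 1) := ⟨(i : ℕ) + 1, hl⟩ with hldef
      rw [pow_succ', Matrix.mul_apply]
      have hterm : 0 < flowM n i l * (flowM n ^ k) l j := by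
        rw [flowM_adj i l (by simp [hldef]), one_mul]
        exact ih l j (by simp [hldef]; omega)
      calc (0:ℝ) < flowM n i l * (flowM n ^ k) l j := hterm
        _ ≤ ∑ p, flowM n i p * (flowM n ^ k) p j :=
          Finset.single_le_sum (f := fun p => flowM n i p * (flowM n ^ k) p j)
            (fun p _ => mul_nonneg (flowM_nonneg i p) (flowM_pow_nonneg k p j))
            (Finset.mem_univ l)
    · have hl : (i : ℕ) - 1 < n + 1 := by omega
      set l : Fin (n + 1) := ⟨(i : ℕ) - 1, hl⟩ with hldef
      rw [pow_succ', Matrix.mul_apply]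
      have hterm : 0 < flowM n i l * (flowM n ^ k) l j := by
        rw [flowM_adj i l (by simp [hldef]; omega), one_mul]
        exact ih l j (by simp [hldef]; omega)
      calc (0:ℝ) < flowM n i l * (flowM n ^ k) l j := hterm
        _ ≤ ∑ p, flowM n i p * (flowM n ^ k) p j :=
          Finset.single_le_sum (f := fun p => flowM n i p * (flowM n ^ k) p j)
            (fun p _ => mul_nonneg (flowM_nonneg i p) (flowM_pow_nonneg k p j))
            (Finset.mem_univ l)

lemma flowB_decomp {n : ℕ} (t : ℝ) :
    (-t) • flowB n = t • flowM n + (-(2 * t)) • (1 : Matrix (Fin (n + 1)) (Fin (n + 1)) ℝ) := by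
  funext i j
  simp only [Matrix.add_apply, Matrix.smul_apply, Matrix.one_apply, flowB, flowM, smul_eq_mul,
    Fin.ext_iff]
  split_ifs <;> first | ring1 | (exfalso; omega)

lemma exp_flowM_pos {n : ℕ} (t : ℝ) (ht : 0 < t) (i j : Fin (n + 1)) :
    0 < NormedSpace.exp (t • flowM n) i j := by
  rw [exp_entry]
  have hterm : ∀ k : ℕ, ((Nat.factorial k : ℕ) : ℝ)⁻¹ * ((t • flowM n) ^ k) i j
      = ((Nat.factorial k : ℕ) : ℝ)⁻¹ * t ^ k * (flowM n ^ k) i j := by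
    intro k; rw [smul_pow, Matrix.smul_apply, smul_eq_mul]; ring
  simp_rw [hterm]
  set k0 : ℕ := if (i : ℕ) ≤ (j : ℕ) then (j : ℕ) - i else (i : ℕ) - j with hk0
  have hsum : Summable (fun k : ℕ =>
      ((Nat.factorial k : ℕ) : ℝ)⁻¹ * t ^ k * (flowM n ^ k) i j) := by
    have := summable_entry (t • flowM n) i j
    simpa [hterm] using this
  have hcond : (i : ℕ) + k0 = j ∨ (j : ℕ) + k0 = i := by
    rw [hk0]; split_ifs with h <;> omega
  have hfac : ∀ k : ℕ, (0:ℝ) < ((Nat.factorial k : ℕ) : ℝ)⁻¹ := by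
    intro k
    rw [inv_pos]
    exact_mod_cast Nat.factorial_pos k
  exact Summable.tsum_pos hsum
    (fun k => mul_nonneg (mul_nonneg (hfac k).le (pow_nonneg ht.le k)) (flowM_pow_nonneg k i j))
    k0
    (mul_pos (mul_pos (hfac k0) (pow_pos ht k0)) (flowM_pow_pos k0 i j hcond))

lemma exp_flowB_pos {n : ℕ} (t : ℝ) (ht : 0 < t) (i j : Fin (n + 1)) :
    0 < NormedSpace.exp ((-t) • flowB n) i j := by
  rw [flowB_decomp]
  have hdec := Matrix.exp_add_of_commute (t • flowM n)
    ((-(2 * t)) • (1 : Matrix (Fin (n + 1)) (Fin (n + 1)) ℝ))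
    (((Commute.one_right (flowM n)).smul_left t).smul_right (-(2 * t)))
  rw [hdec]
  rw [exp_smul_one, Matrix.mul_smul, Matrix.mul_one, Matrix.smul_apply, smul_eq_mul]
  exact mul_pos (Real.exp_pos _) (exp_flowM_pos t ht i j)

/-! ### Intertwining powers and the exponential -/

lemma intertwine_smul {n : ℕ} (hn : 1 ≤ n) (t : ℝ) (x : Fin (n + 2) → ℝ) :
    dOp (((-t) • coarseningMatrix n).mulVec x) = ((-t) • flowB n).mulVec (dOp x) := by
  funext i
  have h := congrFun (intertwine hn x) i
  simp only [dOp, Matrix.smul_mulVec, Pi.smul_apply, smul_eq_mul] at *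
  rw [← mul_sub, h]

lemma intertwine_pow {n : ℕ} (hn : 1 ≤ n) (t : ℝ) (k : ℕ) (x : Fin (n + 2) → ℝ) :
    dOp ((((-t) • coarseningMatrix n) ^ k).mulVec x)
      = (((-t) • flowB n) ^ k).mulVec (dOp x) := by
  induction k generalizing x with
  | zero => simp [Matrix.one_mulVec]
  | succ k ih =>
    rw [pow_succ, pow_succ, ← Matrix.mulVec_mulVec, ← Matrix.mulVec_mulVec, ih,
      intertwine_smul hn, Matrix.mulVec_mulVec]

lemma main_diff {n : ℕ} (hn : 1 ≤ n) (t : ℝ) (x : Fin (n + 2) → ℝ) (i : Fin (n + 1)) :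
    (NormedSpace.exp ((-t) • coarseningMatrix n)).mulVec x i.succ
        - (NormedSpace.exp ((-t) • coarseningMatrix n)).mulVec x i.castSucc
      = (NormedSpace.exp ((-t) • flowB n)).mulVec (dOp x) i := by
  rw [exp_mulVec, exp_mulVec, exp_mulVec,
    ← Summable.tsum_sub (summable_mulVec_entry _ x i.succ) (summable_mulVec_entry _ x i.castSucc)]
  congr 1
  funext k
  have h := congrFun (intertwine_pow hn t k x) i
  simp only [dOp] at h
  rw [← mul_sub, h]

lemma exp_mulVec_boundary {n : ℕ} (t : ℝ) (x : Fin (n + 2) → ℝ) (b : Fin (n + 2))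
    (hb : (b : ℕ) = 0 ∨ (b : ℕ) = n + 1) :
    (NormedSpace.exp ((-t) • coarseningMatrix n)).mulVec x b = x b := by
  rw [exp_mulVec]
  rw [tsum_eq_single 0 (fun k hk => ?_)]
  · simp [Matrix.one_mulVec]
  · obtain ⟨k', rfl⟩ := Nat.exists_eq_succ_of_ne_zero hk
    rw [pow_succ', ← Matrix.mulVec_mulVec, Matrix.smul_mulVec, Pi.smul_apply,
      A_mulVec_boundary _ _ hb, smul_zero, mul_zero]

lemma exists_pos_increment {n : ℕ} (x : Fin (n + 2) → ℝ) (hx0 : x 0 = 0)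
    (hx1 : x (Fin.last (n + 1)) = 1) (hmono : Monotone x) :
    ∃ l : Fin (n + 1), 0 < dOp x l := by
  by_contra h
  push_neg at h
  have heq : ∀ l : Fin (n + 1), x l.succ = x l.castSucc := by
    intro l
    have h1 := h l
    have h2 : x l.castSucc ≤ x l.succ := hmono (Fin.castSucc_le_succ l)
    simp only [dOp] at h1
    linarith
  have hconst : ∀ k : Fin (n + 2), x k = x 0 := by
    intro k
    induction k using Fin.induction with
    | zero => rfl
    | succ i ih => rw [heq i]; exact ih
  rw [hconst (Fin.last (n + 1)), hx0] at hx1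
  norm_num at hx1

/-- For `t > 0`, `x ↦ exp(-t A_n) x` is injective and maps `Δ_n` into its interior. -/
theorem exp_neg_coarseningMatrix_maps_into_interior (n : ℕ) (hn : 1 ≤ n) (t : ℝ) (ht : 0 < t) :
    Function.Injective (fun x : Fin (n + 2) → ℝ =>
        (NormedSpace.exp ((-t) • coarseningMatrix n)).mulVec x) ∧
      ∀ x ∈ simplexDelta n,
        (NormedSpace.exp ((-t) • coarseningMatrix n)).mulVec x ∈ simplexDeltaInterior n := by
  constructor
  · -- injectivity
    have h1 : NormedSpace.exp (t • coarseningMatrix n)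
        * NormedSpace.exp ((-t) • coarseningMatrix n) = 1 := by
      rw [← Matrix.exp_add_of_commute _ _
        (((Commute.refl (coarseningMatrix n)).smul_left t).smul_right (-t))]
      have hz : t • coarseningMatrix n + (-t) • coarseningMatrix n = 0 := by
        rw [← add_smul]; simp
      rw [hz, NormedSpace.exp_zero]
    have hli : ∀ w : Fin (n + 2) → ℝ,
        (NormedSpace.exp (t • coarseningMatrix n)).mulVec
          ((NormedSpace.exp ((-t) • coarseningMatrix n)).mulVec w) = w := by
      intro w
      rw [Matrix.mulVec_mulVec, h1, Matrix.one_mulVec]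
    intro u v huv
    simp only at huv
    rw [← hli u, ← hli v, huv]
  · -- maps into interior
    rintro x ⟨hx0, hx1, hmono⟩
    set z := (NormedSpace.exp ((-t) • coarseningMatrix n)).mulVec x with hz
    have hz0 : z 0 = 0 := by
      rw [hz, exp_mulVec_boundary t x 0 (Or.inl rfl), hx0]
    have hzlast : z (Fin.last (n + 1)) = 1 := by
      rw [hz, exp_mulVec_boundary t x (Fin.last (n + 1)) (Or.inr (by simp)), hx1]
    refine ⟨hz0, hzlast, ?_⟩
    rw [Fin.strictMono_iff_lt_succ]
    intro i
    have hdiff := main_diff hn t x i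
    rw [← hz] at hdiff
    have hpos : 0 < (NormedSpace.exp ((-t) • flowB n)).mulVec (dOp x) i := by
      obtain ⟨l0, hl0⟩ := exists_pos_increment x hx0 hx1 hmono
      rw [Matrix.mulVec, dotProduct]
      have hnn : ∀ l : Fin (n + 1), 0 ≤ dOp x l := by
        intro l
        have := hmono (Fin.castSucc_le_succ l)
        simp only [dOp]
        linarith
      calc (0:ℝ) < NormedSpace.exp ((-t) • flowB n) i l0 * dOp x l0 :=
            mul_pos (exp_flowB_pos t ht i l0) hl0
        _ ≤ ∑ l, NormedSpace.exp ((-t) • flowB n) i l * dOp x l :=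
            Finset.single_le_sum
              (f := fun l => NormedSpace.exp ((-t) • flowB n) i l * dOp x l)
              (fun l _ => mul_nonneg (exp_flowB_pos t ht i l).le (hnn l))
              (Finset.mem_univ l0)
    linarith [hdiff, hpos]
end

section
/- Let f: [0,t] → R be continuously differentiable. Then the indicatrix N(a) = #{s ∈ [0,t] : f(s) = a} satisfies ∫_R N(a) da = ∫_0^t |f'(s)| ds (Banach's indicatrix theorem for C^1 functions), where N is interpreted as an extended-real-valued measurable function. -/
open MeasureTheory ENNReal

lemma encard_toENNReal_eq_count {α : Type*} [MeasurableSpace α] [MeasurableSingletonClass α]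
    (s : Set α) : (s.encard : ℝ≥0∞) = Measure.count s := by
  rcases s.finite_or_infinite with hs | hs
  · rw [Measure.count_apply_finite s hs, hs.encard_eq_coe_toFinset_card]
    simp
  · rw [Measure.count_apply_infinite hs, Set.encard_eq_top hs]
    simp

/-- Banach's indicatrix theorem for C¹ functions: the integral over `a ∈ ℝ` of the
number of solutions `s ∈ [0,t]` of `f(s) = a` equals the total variation
`∫_0^t |f'(s)| ds`. -/
theorem banach_indicatrix (t : ℝ) (ht : 0 < t) (f : ℝ → ℝ)
    (hf : ContDiffOn ℝ 1 f (Set.Icc 0 t)) :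
    ∫⁻ a : ℝ, ({s ∈ Set.Icc (0 : ℝ) t | f s = a}.encard : ℝ≥0∞)
      = ∫⁻ s in Set.Icc (0 : ℝ) t, ENNReal.ofReal |derivWithin f (Set.Icc 0 t) s| := by
  have huniq : UniqueDiffOn ℝ (Set.Icc (0:ℝ) t) := uniqueDiffOn_Icc ht
  set g : ℝ → ℝ := derivWithin f (Set.Icc 0 t) with hg
  have hfd : DifferentiableOn ℝ f (Set.Icc 0 t) := hf.differentiableOn one_ne_zero
  have hgc : ContinuousOn g (Set.Icc 0 t) := hf.continuousOn_derivWithin huniq le_rfl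
  have hfc : ContinuousOn f (Set.Icc 0 t) := hf.continuousOn
  have hderiv : ∀ x ∈ Set.Icc (0:ℝ) t, HasDerivWithinAt f (g x) (Set.Icc 0 t) x :=
    fun x hx => (hfd x hx).hasDerivWithinAt
  have hderivAt : ∀ x ∈ Set.Ioo (0:ℝ) t, HasDerivAt f (g x) x := by
    intro x hx
    exact (hderiv x (Set.Ioo_subset_Icc_self hx)).hasDerivAt (Icc_mem_nhds hx.1 hx.2)
  have hcontAt : ∀ x ∈ Set.Ioo (0:ℝ) t, ContinuousAt g x := fun x hx =>
    (hgc x (Set.Ioo_subset_Icc_self hx)).continuousAt (Icc_mem_nhds hx.1 hx.2)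
  -- the open set where the derivative does not vanish
  set U : Set ℝ := {x | x ∈ Set.Ioo (0:ℝ) t ∧ g x ≠ 0} with hU
  have hUsub : U ⊆ Set.Ioo 0 t := fun x hx => hx.1
  have hUIcc : U ⊆ Set.Icc 0 t := hUsub.trans Set.Ioo_subset_Icc_self
  have hUopen : IsOpen U := by
    rw [isOpen_iff_mem_nhds]
    intro x hx
    have h1 : Set.Ioo (0:ℝ) t ∈ nhds x := Ioo_mem_nhds hx.1.1 hx.1.2
    have h2 : g ⁻¹' ({(0:ℝ)}ᶜ) ∈ nhds x :=
      (hcontAt x hx.1).preimage_mem_nhds (isOpen_compl_singleton.mem_nhds hx.2)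
    filter_upwards [h1, h2] with y hy1 hy2
    exact ⟨hy1, hy2⟩
  -- the countable family of connected components of U
  set ι : Set (Set ℝ) := connectedComponentIn U '' (Set.range (Rat.cast : ℚ → ℝ) ∩ U) with hι
  have hιct : ι.Countable := ((Set.countable_range _).mono Set.inter_subset_left).image _
  haveI : Countable ↥ι := hιct.to_subtype
  have hCsub : ∀ C ∈ ι, C ⊆ U := by
    rintro C ⟨q, hq, rfl⟩; exact connectedComponentIn_subset _ _
  have hCopen : ∀ C ∈ ι, IsOpen C := by
    rintro C ⟨q, hq, rfl⟩; exact hUopen.connectedComponentIn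
  have hCconn : ∀ C ∈ ι, IsPreconnected C := by
    rintro C ⟨q, hq, rfl⟩; exact isPreconnected_connectedComponentIn
  have hUeq : U = ⋃ C : ι, (C : Set ℝ) := by
    apply Set.Subset.antisymm
    · intro x hx
      have hopen : IsOpen (connectedComponentIn U x) := hUopen.connectedComponentIn
      have hne : (connectedComponentIn U x).Nonempty := ⟨x, mem_connectedComponentIn hx⟩
      obtain ⟨q, hq⟩ := Rat.denseRange_cast.exists_mem_open hopen hne
      have hqU : (q : ℝ) ∈ U := connectedComponentIn_subset _ _ hq
      have heq : connectedComponentIn U x = connectedComponentIn U (q : ℝ) :=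
        connectedComponentIn_eq hq
      refine Set.mem_iUnion.2 ⟨⟨connectedComponentIn U (q : ℝ), ⟨q, ⟨⟨q, rfl⟩, hqU⟩, rfl⟩⟩, ?_⟩
      show x ∈ connectedComponentIn U (q : ℝ)
      rw [← heq]; exact mem_connectedComponentIn hx
    · exact Set.iUnion_subset fun C => hCsub _ C.2
  have hdisj : ∀ C ∈ ι, ∀ D ∈ ι, C ≠ D → Disjoint C D := by
    rintro C ⟨q, hq, rfl⟩ D ⟨r, hr, rfl⟩ hne
    refine Set.disjoint_left.2 fun x hxC hxD => hne ?_
    rw [connectedComponentIn_eq hxC, connectedComponentIn_eq hxD]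
  -- injectivity on each component
  have hCinj : ∀ C ∈ ι, Set.InjOn f C := by
    intro C hC
    have hconv : Convex ℝ C := (hCconn C hC).convex
    have hsub : C ⊆ Set.Ioo 0 t := (hCsub C hC).trans hUsub
    have hder : ∀ x ∈ C, deriv f x = g x := fun x hx => (hderivAt x (hsub hx)).deriv
    have hco : ContinuousOn f C := hfc.mono (hsub.trans Set.Ioo_subset_Icc_self)
    have hint : interior C = C := (hCopen C hC).interior_eq
    have hordc : Set.OrdConnected (g '' C) :=
      ((hCconn C hC).image g (hgc.mono (hsub.trans Set.Ioo_subset_Icc_self))).ordConnected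
    have hne0 : ∀ x ∈ C, g x ≠ 0 := fun x hx => (hCsub C hC hx).2
    by_cases hpos : ∀ x ∈ C, 0 < g x
    · refine (strictMonoOn_of_deriv_pos hconv hco fun x hx => ?_).injOn
      rw [hint] at hx; rw [hder x hx]; exact hpos x hx
    · push_neg at hpos
      obtain ⟨x₀, hx₀C, hx₀⟩ := hpos
      have hx₀neg : g x₀ < 0 := lt_of_le_of_ne hx₀ (hne0 x₀ hx₀C)
      have hneg : ∀ x ∈ C, g x < 0 := by
        intro x hx
        by_contra h
        push_neg at h
        have hxpos : 0 < g x := lt_of_le_of_ne h (Ne.symm (hne0 x hx))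
        have h0 : (0:ℝ) ∈ g '' C :=
          hordc.out ⟨x₀, hx₀C, rfl⟩ ⟨x, hx, rfl⟩ ⟨hx₀neg.le, hxpos.le⟩
        obtain ⟨z, hzC, hz⟩ := h0
        exact hne0 z hzC hz
      refine (strictAntiOn_of_deriv_neg hconv hco fun x hx => ?_).injOn
      rw [hint] at hx; rw [hder x hx]; exact hneg x hx
  -- measurability of images
  have hmeasImg : ∀ C ∈ ι, MeasurableSet (f '' C) := by
    intro C hC
    exact (((hCconn C hC).image f (hfc.mono ((hCsub C hC).trans hUIcc))).ordConnected).measurableSet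
  -- measure of image of each component
  have himg : ∀ C ∈ ι, volume (f '' C) = ∫⁻ s in C, ENNReal.ofReal |g s| := by
    intro C hC
    have hmeas : MeasurableSet C := (hCopen C hC).measurableSet
    have hder : ∀ x ∈ C, HasFDerivWithinAt f ((1 : ℝ →L[ℝ] ℝ).smulRight (g x)) C x := fun x hx =>
      ((hderivAt x ((hCsub C hC).trans hUsub hx)).hasDerivWithinAt).hasFDerivWithinAt
    have := lintegral_image_eq_lintegral_abs_det_fderiv_mul volume hmeas hder (hCinj C hC)
      (fun _ => (1 : ℝ≥0∞))
    simpa [ContinuousLinearMap.det_toSpanSingleton, setLIntegral_one] using this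
  -- the critical values have measure zero
  set Z : Set ℝ := {x ∈ Set.Icc (0:ℝ) t | g x = 0} with hZdef
  have hZm : MeasurableSet Z := by
    have : Z = Set.Icc (0:ℝ) t ∩ g ⁻¹' {0} := by
      ext x; simp [hZdef, Set.mem_setOf_eq, and_comm]
    rw [this]
    exact (hgc.preimage_isClosed_of_isClosed isClosed_Icc isClosed_singleton).measurableSet
  have hZ : volume (f '' Z) = 0 := by
    have hb := addHaar_image_le_lintegral_abs_det_fderiv volume hZm
      (f' := fun _ => (1 : ℝ →L[ℝ] ℝ).smulRight (0:ℝ)) (f := f) ?_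
    · refine le_antisymm ?_ (zero_le)
      simpa [ContinuousLinearMap.det_toSpanSingleton] using hb
    · intro x hx
      have h1 := (hderiv x hx.1).mono (show Z ⊆ Set.Icc 0 t from fun y hy => hy.1)
      have h0 : g x = 0 := hx.2
      rw [h0] at h1
      exact h1.hasFDerivWithinAt
  -- a.e. identity for the indicatrix
  have hnull : volume (f '' Z ∪ {f 0, f t}) = 0 :=
    measure_union_null hZ (((Set.finite_singleton _).insert _).measure_zero _)
  have hN : ∀ᵐ a : ℝ, ({s ∈ Set.Icc (0:ℝ) t | f s = a}.encard : ℝ≥0∞)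
      = ∑' C : ι, (f '' (C : Set ℝ)).indicator 1 a := by
    filter_upwards [measure_eq_zero_iff_ae_notMem.1 hnull] with a ha
    simp only [Set.mem_union, Set.mem_insert_iff, Set.mem_singleton_iff, not_or] at ha
    obtain ⟨ha1, ha2, ha3⟩ := ha
    have hSeq : {s ∈ Set.Icc (0:ℝ) t | f s = a}
        = ⋃ C : ι, ((C : Set ℝ) ∩ f ⁻¹' {a}) := by
      ext s
      simp only [Set.mem_setOf_eq, Set.mem_iUnion, Set.mem_inter_iff, Set.mem_preimage,
        Set.mem_singleton_iff]
      constructor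
      · rintro ⟨hsIcc, hfs⟩
        have hs0 : s ≠ 0 := fun h => ha2 (by rw [← hfs, h])
        have hst : s ≠ t := fun h => ha3 (by rw [← hfs, h])
        have hsIoo : s ∈ Set.Ioo 0 t :=
          ⟨lt_of_le_of_ne hsIcc.1 (Ne.symm hs0), lt_of_le_of_ne hsIcc.2 hst⟩
        have hgs : g s ≠ 0 := fun h => ha1 ⟨s, ⟨hsIcc, h⟩, hfs⟩
        have hsU : s ∈ U := ⟨hsIoo, hgs⟩
        rw [hUeq] at hsU
        obtain ⟨C, hC⟩ := Set.mem_iUnion.1 hsU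
        exact ⟨C, hC, hfs⟩
      · rintro ⟨C, hsC, hfs⟩
        exact ⟨hUIcc (hCsub _ C.2 hsC), hfs⟩
    have hsub : ∀ C : ι, Set.Subsingleton ((C : Set ℝ) ∩ f ⁻¹' {a}) := by
      rintro C x ⟨hxC, hxa⟩ y ⟨hyC, hya⟩
      have h1 : f x = a := hxa
      have h2 : f y = a := hya
      exact hCinj _ C.2 hxC hyC (h1.trans h2.symm)
    rw [encard_toENNReal_eq_count, hSeq,
      measure_iUnion ?_ (fun C => (hsub C).measurableSet)]
    · refine tsum_congr fun C => ?_
      by_cases hmem : a ∈ f '' (C : Set ℝ)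
      · obtain ⟨s, hsC, hfs⟩ := hmem
        have hmem' : a ∈ f '' (C : Set ℝ) := ⟨s, hsC, hfs⟩
        have hfs' : s ∈ f ⁻¹' {a} := Set.mem_preimage.2 (Set.mem_singleton_iff.2 hfs)
        have : (C : Set ℝ) ∩ f ⁻¹' {a} = {s} := by
          apply Set.Subset.antisymm
          · intro x hx
            exact hsub C hx ⟨hsC, hfs'⟩
          · rintro x rfl
            exact ⟨hsC, hfs'⟩
        rw [this, Measure.count_singleton, Set.indicator_of_mem hmem']
        simp
      · have : (C : Set ℝ) ∩ f ⁻¹' {a} = ∅ := by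
          ext x
          simp only [Set.mem_inter_iff, Set.mem_preimage, Set.mem_singleton_iff,
            Set.mem_empty_iff_false, iff_false, not_and]
          intro hxC hxa
          exact hmem ⟨x, hxC, hxa⟩
        rw [this, measure_empty, Set.indicator_of_notMem hmem]
    · intro C D hne
      exact (hdisj _ C.2 _ D.2 (fun h => hne (Subtype.ext h))).mono
        Set.inter_subset_left Set.inter_subset_left
  -- put everything together
  calc ∫⁻ a : ℝ, ({s ∈ Set.Icc (0 : ℝ) t | f s = a}.encard : ℝ≥0∞)
      = ∫⁻ a : ℝ, ∑' C : ι, (f '' (C : Set ℝ)).indicator 1 a := lintegral_congr_ae hN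
    _ = ∑' C : ι, ∫⁻ a : ℝ, (f '' (C : Set ℝ)).indicator 1 a :=
        lintegral_tsum fun C => (measurable_one.indicator (hmeasImg _ C.2)).aemeasurable
    _ = ∑' C : ι, volume (f '' (C : Set ℝ)) := by
        refine tsum_congr fun C => ?_
        rw [lintegral_indicator (hmeasImg _ C.2)]
        simp
    _ = ∑' C : ι, ∫⁻ s in (C : Set ℝ), ENNReal.ofReal |g s| :=
        tsum_congr fun C => himg _ C.2
    _ = ∫⁻ s in U, ENNReal.ofReal |g s| := by
        rw [hUeq]
        exact (lintegral_iUnion (fun C => (hCopen _ C.2).measurableSet)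
          (fun C D hne => hdisj _ C.2 _ D.2 (fun h => hne (Subtype.ext h))) _).symm
    _ = ∫⁻ s in Set.Icc (0:ℝ) t, ENNReal.ofReal |g s| := by
        have hrest : ∫⁻ s in Set.Icc (0:ℝ) t \ U, ENNReal.ofReal |g s| = 0 := by
          have h1 : ∀ᵐ s ∂(volume.restrict (Set.Icc (0:ℝ) t \ U)), s ∈ Set.Icc (0:ℝ) t \ U :=
            ae_restrict_mem (measurableSet_Icc.diff hUopen.measurableSet)
          have h2 : ∀ᵐ s : ℝ, s ∉ ({0, t} : Set ℝ) :=
            measure_eq_zero_iff_ae_notMem.1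
              (((Set.finite_singleton _).insert _).measure_zero _)
          have h2' : ∀ᵐ s ∂(volume.restrict (Set.Icc (0:ℝ) t \ U)), s ∉ ({0, t} : Set ℝ) :=
            h2.filter_mono (ae_mono Measure.restrict_le_self)
          have heq0 : ∀ᵐ s ∂(volume.restrict (Set.Icc (0:ℝ) t \ U)),
              ENNReal.ofReal |g s| = 0 := by
            filter_upwards [h1, h2'] with s hs hs2
            have hg0 : g s = 0 := by
              by_contra hgne
              have hnIoo : s ∉ Set.Ioo 0 t := fun hIoo => hs.2 ⟨hIoo, hgne⟩
              have : s = 0 ∨ s = t := by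
                rcases hs.1 with ⟨hl, hr⟩
                rcases eq_or_lt_of_le hl with h | h
                · exact Or.inl h.symm
                rcases eq_or_lt_of_le hr with h' | h'
                · exact Or.inr h'
                exact absurd ⟨h, h'⟩ hnIoo
              rcases this with h | h
              · exact hs2 (Or.inl h)
              · exact hs2 (Or.inr h)
            simp [hg0]
          rw [lintegral_congr_ae heq0, lintegral_zero]
        have hsplit : Set.Icc (0:ℝ) t = U ∪ (Set.Icc (0:ℝ) t \ U) :=
          (Set.union_diff_cancel hUIcc).symm
        conv_rhs => rw [hsplit]
        rw [lintegral_union (measurableSet_Icc.diff hUopen.measurableSet)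
          disjoint_sdiff_self_right, hrest, add_zero]
end

section
/- Let Φ: K × [0,ε) → R^d be a C^1 map where K is an open subset of a hyperplane in R^d, such that for each x ∈ K, s ↦ Φ(x,s) solves x' = F(x) with Φ(x,0) = x, where F is a C^1 vector field with F·n > 0 on K (n the unit normal into the relevant halfspace). Then for any compact Borel set B ⊆ K, lim_{t↓0} |B_t|/t = ∫_B F(x)·n(x) dx, where B_t = {Φ(x,s) : x ∈ B, 0 ≤ s ≤ t} and |·| denotes d-dimensional Lebesgue measure. -/
open MeasureTheory Filter

noncomputable def sliceEqv (d : ℕ) : (Fin (d + 1) → ℝ) ≃L[ℝ] (Fin d → ℝ) × ℝ :=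
  LinearEquiv.toContinuousLinearEquiv <| LinearEquiv.ofLinear
    ((LinearMap.funLeft ℝ ℝ Fin.castSucc).prod (LinearMap.proj (Fin.last d)))
    (LinearMap.pi (fun i => Fin.lastCases (LinearMap.snd ℝ (Fin d → ℝ) ℝ)
      (fun k => (LinearMap.proj k).comp (LinearMap.fst ℝ (Fin d → ℝ) ℝ)) i))
    (by
      apply LinearMap.ext; rintro ⟨x, s⟩
      ext
      · simp [LinearMap.funLeft, Fin.init]
      · simp)
    (by
      apply LinearMap.ext; intro y
      funext i
      induction i using Fin.lastCases with
      | last => simp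
      | cast k => simp [LinearMap.funLeft])

lemma sliceEqv_apply {d : ℕ} (y : Fin (d + 1) → ℝ) :
    sliceEqv d y = (Fin.init y, y (Fin.last d)) := rfl

lemma sliceEqv_symm_apply {d : ℕ} (p : (Fin d → ℝ) × ℝ) :
    (sliceEqv d).symm p = Fin.snoc p.1 p.2 := by
  funext i
  induction i using Fin.lastCases with
  | last => simp [sliceEqv]
  | cast k => simp [sliceEqv]

lemma exists_small_time {d : ℕ} {Bc : Set (Fin d → ℝ)} (hB : IsCompact Bc)
    {b : ℝ} (hb : 0 < b) {g : (Fin d → ℝ) × ℝ → ℝ}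
    (hg : ContinuousOn g (Bc ×ˢ Set.Icc 0 b))
    (h0 : ∀ x ∈ Bc, g (x, 0) < 0) :
    ∃ t0 : ℝ, 0 < t0 ∧ t0 ≤ b ∧ ∀ x ∈ Bc, ∀ s ∈ Set.Icc (0:ℝ) t0, g (x, s) < 0 := by
  set P : Set ((Fin d → ℝ) × ℝ) := Bc ×ˢ Set.Icc 0 b with hP
  have hPc : IsCompact P := hB.prod isCompact_Icc
  set A : Set ((Fin d → ℝ) × ℝ) := P ∩ g ⁻¹' Set.Ici 0 with hA
  have hAclosed : IsClosed A :=
    hg.preimage_isClosed_of_isClosed (hB.isClosed.prod isClosed_Icc) isClosed_Ici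
  have hAc : IsCompact A := hPc.of_isClosed_subset hAclosed Set.inter_subset_left
  rcases A.eq_empty_or_nonempty with hAe | hAne
  · refine ⟨b, hb, le_rfl, fun x hx s hs => ?_⟩
    by_contra h
    have : (x, s) ∈ A := ⟨⟨hx, hs⟩, not_lt.mp h⟩
    simp [hAe] at this
  · obtain ⟨p0, hp0A, hmin⟩ := hAc.exists_isMinOn hAne continuous_snd.continuousOn
    have hp0pos : 0 < p0.2 := by
      rcases lt_or_eq_of_le hp0A.1.2.1 with h | h
      · exact h
      · exfalso
        have hx : p0.1 ∈ Bc := hp0A.1.1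
        have : (0:ℝ) ≤ g (p0.1, 0) := by
          have h2 := hp0A.2
          have : p0 = (p0.1, 0) := Prod.ext rfl h.symm
          rw [this] at h2
          exact h2
        exact absurd (h0 p0.1 hx) (not_lt.mpr this)
    refine ⟨p0.2 / 2, by linarith, by linarith [hp0A.1.2.2], fun x hx s hs => ?_⟩
    by_contra h
    have hmem : (x, s) ∈ A := ⟨⟨hx, hs.1, by linarith [hs.2, hp0A.1.2.2]⟩, not_lt.mp h⟩
    have := hmin hmem
    simp only [IsMinOn, IsMinFilter] at this
    have : p0.2 ≤ s := hmin hmem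
    linarith [hs.2]

lemma exists_lipschitz_ball {n : ℕ} {F : (Fin n → ℝ) → (Fin n → ℝ)}
    (hF : ContDiff ℝ 1 F) (R : ℝ) :
    ∃ L : NNReal, LipschitzOnWith L F (Metric.closedBall 0 R) := by
  have hcont : ContinuousOn (fun y => ‖fderiv ℝ F y‖) (Metric.closedBall (0 : Fin n → ℝ) R) :=
    ((hF.continuous_fderiv one_ne_zero).norm).continuousOn
  obtain ⟨C, hC⟩ := (isCompact_closedBall (0 : Fin n → ℝ) R).exists_bound_of_continuousOn hcont
  refine ⟨⟨max C 0, le_max_right _ _⟩, ?_⟩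
  apply Convex.lipschitzOnWith_of_nnnorm_fderiv_le
    (fun x _ => (hF.differentiable one_ne_zero).differentiableAt)
    (fun x hx => ?_) (convex_closedBall 0 R)
  · change ((‖fderiv ℝ F x‖₊ : NNReal) : ℝ) ≤ max C 0
    rw [coe_nnnorm]
    have := hC x hx
    rw [norm_norm] at this
    exact le_trans this (le_max_left _ _)

lemma snoc_mem_preimage {d : ℕ} {K : Set (Fin d → ℝ)} {eps : ℝ} (heps : 0 < eps)
    {x : Fin d → ℝ} (hx : x ∈ K) :
    (Fin.snoc x 0 : Fin (d+1) → ℝ) ∈ (sliceEqv d) ⁻¹' (K ×ˢ Set.Ico 0 eps) := by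
  simp [Set.mem_preimage, sliceEqv_apply, Fin.init_snoc, Fin.snoc_last, hx,
    Set.mem_Ico, le_refl, heps]

lemma uniqueDiffOn_slice {d : ℕ} {K : Set (Fin d → ℝ)} (hK : IsOpen K) {eps : ℝ}
    (heps : 0 < eps) : UniqueDiffOn ℝ ((sliceEqv d) ⁻¹' (K ×ˢ Set.Ico 0 eps)) :=
  (sliceEqv d).uniqueDiffOn_preimage_iff.mpr (hK.uniqueDiffOn.prod (uniqueDiffOn_Ico 0 eps))

lemma contDiffOn_slice {d : ℕ} {K : Set (Fin d → ℝ)} {eps : ℝ}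
    {Φ : (Fin d → ℝ) → ℝ → (Fin (d + 1) → ℝ)}
    (hΦC1 : ContDiffOn ℝ 1 (fun p : (Fin d → ℝ) × ℝ => Φ p.1 p.2) (K ×ˢ Set.Ico 0 eps)) :
    ContDiffOn ℝ 1 (fun y : Fin (d+1) → ℝ => Φ (Fin.init y) (y (Fin.last d)))
      ((sliceEqv d) ⁻¹' (K ×ˢ Set.Ico 0 eps)) := by
  have h := hΦC1.comp ((sliceEqv d).contDiff.contDiffOn)
    (Set.mapsTo_preimage _ _)
  refine h.congr fun y _ => ?_
  rw [Function.comp_apply, sliceEqv_apply]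

lemma det_fderivWithin_slice {d : ℕ}
    {K : Set (Fin d → ℝ)} (hK : IsOpen K)
    {F : (Fin (d + 1) → ℝ) → (Fin (d + 1) → ℝ)}
    {eps : ℝ} (heps : 0 < eps)
    {Φ : (Fin d → ℝ) → ℝ → (Fin (d + 1) → ℝ)}
    (hΦ0 : ∀ x ∈ K, Φ x 0 = Fin.snoc x 0)
    (hΦode : ∀ x ∈ K, ∀ s ∈ Set.Ico (0 : ℝ) eps, HasDerivAt (Φ x) (F (Φ x s)) s)
    (hΦC1 : ContDiffOn ℝ 1 (fun p : (Fin d → ℝ) × ℝ => Φ p.1 p.2) (K ×ˢ Set.Ico 0 eps))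
    {x : Fin d → ℝ} (hx : x ∈ K) :
    (fderivWithin ℝ (fun y : Fin (d+1) → ℝ => Φ (Fin.init y) (y (Fin.last d)))
        ((sliceEqv d) ⁻¹' (K ×ˢ Set.Ico 0 eps)) (Fin.snoc x 0)).det
      = F (Fin.snoc x 0) (Fin.last d) := by
  set S : Set (Fin (d+1) → ℝ) := (sliceEqv d) ⁻¹' (K ×ˢ Set.Ico 0 eps) with hS
  set Ψ : (Fin (d+1) → ℝ) → (Fin (d+1) → ℝ) :=
    fun y => Φ (Fin.init y) (y (Fin.last d)) with hΨ
  set y0 : Fin (d+1) → ℝ := Fin.snoc x 0 with hy0def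
  have hy0 : y0 ∈ S := snoc_mem_preimage heps hx
  have hSU : UniqueDiffOn ℝ S := uniqueDiffOn_slice hK heps
  have hΨC1 : ContDiffOn ℝ 1 Ψ S := contDiffOn_slice hΦC1
  set L : (Fin (d+1) → ℝ) →L[ℝ] (Fin (d+1) → ℝ) := fderivWithin ℝ Ψ S y0 with hLdef
  have hL : HasFDerivWithinAt Ψ L S y0 :=
    (hΨC1.differentiableOn one_ne_zero y0 hy0).hasFDerivWithinAt
  -- horizontal directions
  set ι : (Fin d → ℝ) →L[ℝ] (Fin (d+1) → ℝ) :=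
    ((sliceEqv d).symm : ((Fin d → ℝ) × ℝ) →L[ℝ] (Fin (d+1) → ℝ)).comp
      (ContinuousLinearMap.inl ℝ (Fin d → ℝ) ℝ) with hιdef
  have hιapp : ∀ w, ι w = Fin.snoc w 0 := fun w => by
    simp only [hιdef, ContinuousLinearMap.coe_comp', Function.comp_apply,
      ContinuousLinearMap.inl_apply, ContinuousLinearEquiv.coe_coe]
    exact sliceEqv_symm_apply (w, 0)
  have hιmaps : Set.MapsTo ι K S := fun w hw => by
    rw [hιapp]; exact snoc_mem_preimage heps hw
  have hιx : ι x = y0 := hιapp x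
  have hcompA : HasFDerivWithinAt (Ψ ∘ ι) (L.comp ι) K x := by
    refine HasFDerivWithinAt.comp x ?_ ι.hasFDerivAt.hasFDerivWithinAt hιmaps
    rw [hιx]; exact hL
  have hidA : HasFDerivWithinAt (Ψ ∘ ι) (ι : (Fin d → ℝ) →L[ℝ] (Fin (d+1) → ℝ)) K x := by
    refine (ι.hasFDerivAt.hasFDerivWithinAt).congr (fun w hw => ?_) ?_
    · show Ψ (ι w) = ι w
      rw [hιapp w, hΨ]
      simp only [Fin.init_snoc, Fin.snoc_last]
      rw [hΦ0 w hw]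
    · show Ψ (ι x) = ι x
      rw [hιapp x, hΨ]
      simp only [Fin.init_snoc, Fin.snoc_last]
      rw [hΦ0 x hx]
  have hA : L.comp ι = (ι : (Fin d → ℝ) →L[ℝ] (Fin (d+1) → ℝ)) :=
    (hK.uniqueDiffOn x hx).eq hcompA hidA
  have hAw : ∀ w, L (Fin.snoc w 0) = Fin.snoc w 0 := fun w => by
    have := congrArg (fun T => T w) hA
    simpa [hιapp w] using this
  -- vertical direction
  set c : ℝ → (Fin (d+1) → ℝ) := fun s => (sliceEqv d).symm (x, s) with hcdef
  have hcapp : ∀ s, c s = Fin.snoc x s := fun s => sliceEqv_symm_apply (x, s)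
  set v : Fin (d+1) → ℝ := (sliceEqv d).symm (0, 1) with hvdef
  have hcderiv : HasDerivAt c v 0 := by
    have hfun : c = fun s =>
        (((sliceEqv d).symm : ((Fin d → ℝ) × ℝ) →L[ℝ] (Fin (d+1) → ℝ)).comp
          (ContinuousLinearMap.inr ℝ (Fin d → ℝ) ℝ)) s + (sliceEqv d).symm (x, 0) := by
      funext s
      simp only [ContinuousLinearMap.coe_comp', Function.comp_apply,
        ContinuousLinearMap.inr_apply, ContinuousLinearEquiv.coe_coe]
      rw [← map_add]
      norm_num
      rfl
    rw [hfun]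
    have := ((((sliceEqv d).symm : ((Fin d → ℝ) × ℝ) →L[ℝ] (Fin (d+1) → ℝ)).comp
      (ContinuousLinearMap.inr ℝ (Fin d → ℝ) ℝ)).hasDerivAt (x := (0:ℝ))).add_const
      ((sliceEqv d).symm (x, 0))
    simpa using this
  have hcmaps : Set.MapsTo c (Set.Ico 0 eps) S := fun s hs => by
    rw [hcapp]
    have : (sliceEqv d) (Fin.snoc x s) = (x, s) := by
      rw [sliceEqv_apply]; simp
    simp only [hS, Set.mem_preimage, this]
    exact ⟨hx, hs⟩
  have hc0 : c 0 = y0 := by rw [hcapp]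
  have hcompB : HasDerivWithinAt (Ψ ∘ c) (L v) (Set.Ico 0 eps) 0 := by
    refine HasFDerivWithinAt.comp_hasDerivWithinAt 0 ?_ hcderiv.hasDerivWithinAt hcmaps
    rw [hc0]; exact hL
  have hΨc : (Ψ ∘ c) = Φ x := by
    funext s
    simp only [Function.comp_apply, hcapp s, hΨ, Fin.init_snoc, Fin.snoc_last]
  have hodeB : HasDerivWithinAt (Ψ ∘ c) (F y0) (Set.Ico 0 eps) 0 := by
    rw [hΨc]
    have := (hΦode x hx 0 ⟨le_rfl, heps⟩).hasDerivWithinAt (s := Set.Ico 0 eps)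
    rwa [hΦ0 x hx] at this
  have hB : L v = F y0 := by
    have hu : UniqueDiffWithinAt ℝ (Set.Ico (0:ℝ) eps) 0 :=
      uniqueDiffOn_Ico 0 eps 0 ⟨le_rfl, heps⟩
    exact hu.eq_deriv _ hcompB hodeB
  have hvsnoc : v = (Fin.snoc (0 : Fin d → ℝ) (1:ℝ) : Fin (d+1) → ℝ) := sliceEqv_symm_apply ((0 : Fin d → ℝ), (1:ℝ))
  -- determinant computation
  have hdet : L.det = F y0 (Fin.last d) := by
    set M := LinearMap.toMatrix (Pi.basisFun ℝ (Fin (d+1))) (Pi.basisFun ℝ (Fin (d+1)))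
      (L : (Fin (d+1) → ℝ) →ₗ[ℝ] (Fin (d+1) → ℝ)) with hM
    have hMapp : ∀ i j, M i j = L (Pi.single j 1) i := fun i j => by
      rw [hM, LinearMap.toMatrix_apply, Pi.basisFun_apply, Pi.basisFun_repr]
      rfl
    have hcol : ∀ (k : Fin d) (i : Fin (d+1)),
        M i (Fin.castSucc k) = if i = Fin.castSucc k then 1 else 0 := by
      intro k i
      have h1 : (Pi.single (Fin.castSucc k) 1 : Fin (d+1) → ℝ)
          = Fin.snoc (Pi.single k 1) 0 := by
        funext j
        induction j using Fin.lastCases with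
        | last => simp [Pi.single_apply, (Fin.castSucc_lt_last k).ne']
        | cast m => simp [Pi.single_apply, Fin.castSucc_inj]
      rw [hMapp, h1, hAw]
      induction i using Fin.lastCases with
      | last => simp [(Fin.castSucc_lt_last k).ne']
      | cast m => simp [Pi.single_apply, Fin.castSucc_inj]
    have hlastcol : M (Fin.last d) (Fin.last d) = F y0 (Fin.last d) := by
      have hsingle : (Pi.single (Fin.last d) 1 : Fin (d+1) → ℝ) = v := by
        rw [hvsnoc]; funext j
        induction j using Fin.lastCases with
        | last => simp
        | cast m => simp [Pi.single_apply, (Fin.castSucc_lt_last m).ne]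
      rw [hMapp, hsingle, hB]
    have hdet1 : L.det = M.det := by
      rw [hM, LinearMap.det_toMatrix]
    rw [hdet1, Matrix.det_succ_row M (Fin.last d)]
    rw [Finset.sum_eq_single (Fin.last d)]
    · rw [hlastcol]
      have hsub : M.submatrix (Fin.last d).succAbove (Fin.last d).succAbove = 1 := by
        rw [Fin.succAbove_last]
        ext i j
        rw [Matrix.submatrix_apply, hcol, Matrix.one_apply]
        simp [Fin.castSucc_inj]
      rw [hsub, Matrix.det_one]
      have hpow : ((-1:ℝ))^((Fin.last d : ℕ) + (Fin.last d : ℕ)) = 1 :=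
        Even.neg_one_pow ⟨(Fin.last d : ℕ), rfl⟩
      rw [hpow]
      ring
    · intro j _ hj
      obtain ⟨k, rfl⟩ : ∃ k : Fin d, j = k.castSucc :=
        ⟨j.castLT (Fin.val_lt_last hj), by simp [Fin.castSucc_castLT]⟩
      rw [hcol]
      simp [(Fin.castSucc_lt_last k).ne']
    · intro h; exact absurd (Finset.mem_univ _) h
  exact hdet

lemma exists_inj_time {d : ℕ}
    {K : Set (Fin d → ℝ)}
    {F : (Fin (d + 1) → ℝ) → (Fin (d + 1) → ℝ)} (hF : ContDiff ℝ 1 F)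
    (hFpos : ∀ x ∈ K, 0 < F (Fin.snoc x 0) (Fin.last d))
    {eps : ℝ} (heps : 0 < eps)
    {Φ : (Fin d → ℝ) → ℝ → (Fin (d + 1) → ℝ)}
    (hΦ0 : ∀ x ∈ K, Φ x 0 = Fin.snoc x 0)
    (hΦode : ∀ x ∈ K, ∀ s ∈ Set.Ico (0 : ℝ) eps, HasDerivAt (Φ x) (F (Φ x s)) s)
    (hΦC1 : ContDiffOn ℝ 1 (fun p : (Fin d → ℝ) × ℝ => Φ p.1 p.2) (K ×ˢ Set.Ico 0 eps))
    {B : Set (Fin d → ℝ)} (hB : IsCompact B) (hBK : B ⊆ K) :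
    ∃ t0 : ℝ, 0 < t0 ∧ t0 < eps ∧
      Set.InjOn (fun y : Fin (d+1) → ℝ => Φ (Fin.init y) (y (Fin.last d)))
        {y : Fin (d+1) → ℝ | Fin.init y ∈ B ∧ y (Fin.last d) ∈ Set.Icc 0 t0} := by
  have hΦcont : ContinuousOn (fun p : (Fin d → ℝ) × ℝ => Φ p.1 p.2) (K ×ˢ Set.Ico 0 eps) :=
    hΦC1.continuousOn
  have hsub : ∀ {b : ℝ}, 0 < b → b < eps →
      (B ×ˢ Set.Icc 0 b : Set ((Fin d → ℝ) × ℝ)) ⊆ K ×ˢ Set.Ico 0 eps := by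
    intro b hb hbe p hp
    exact ⟨hBK hp.1, hp.2.1, lt_of_le_of_lt hp.2.2 hbe⟩
  -- Step 1: find t1 with positivity of last component of F along trajectories
  obtain ⟨t1, ht1pos, ht1le, ht1⟩ :=
    exists_small_time hB (b := eps/2) (by linarith)
      (g := fun p => - F (Φ p.1 p.2) (Fin.last d))
      (by
        apply ContinuousOn.neg
        have : ContinuousOn (fun p : (Fin d → ℝ) × ℝ => F (Φ p.1 p.2)) (B ×ˢ Set.Icc 0 (eps/2)) :=
          hF.continuous.comp_continuousOn (hΦcont.mono (hsub (by linarith) (by linarith)))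
        exact (continuous_apply (Fin.last d)).comp_continuousOn this)
      (by
        intro x hx
        simp only [neg_neg, neg_lt, neg_zero]
        rw [hΦ0 x (hBK hx)]
        exact hFpos x (hBK hx))
  have ht1eps : t1 < eps := lt_of_le_of_lt ht1le (by linarith)
  have hpos : ∀ x ∈ B, ∀ s ∈ Set.Icc (0:ℝ) t1, 0 < F (Φ x s) (Fin.last d) := by
    intro x hx s hs
    have := ht1 x hx s hs
    simpa using this
  -- single-trajectory continuity
  have htraj : ∀ x ∈ B, ContinuousOn (Φ x) (Set.Icc 0 t1) := by
    intro x hx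
    have hc : ContinuousOn (fun s : ℝ => ((x, s) : (Fin d → ℝ) × ℝ)) (Set.Icc 0 t1) :=
      (continuous_const.prodMk continuous_id).continuousOn
    have hm : Set.MapsTo (fun s : ℝ => ((x, s) : (Fin d → ℝ) × ℝ)) (Set.Icc 0 t1)
        (K ×ˢ Set.Ico 0 eps) := fun s hs => ⟨hBK hx, hs.1, lt_of_le_of_lt hs.2 ht1eps⟩
    exact (hΦcont.comp hc hm :)
  -- Step 2: strict monotonicity of the last coordinate
  have hmono : ∀ x ∈ B, StrictMonoOn (fun s => Φ x s (Fin.last d)) (Set.Icc 0 t1) := by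
    intro x hx
    have hder : ∀ s ∈ Set.Icc (0:ℝ) t1,
        HasDerivAt (fun u => Φ x u (Fin.last d)) (F (Φ x s) (Fin.last d)) s := by
      intro s hs
      have h1 : HasDerivAt (Φ x) (F (Φ x s)) s :=
        hΦode x (hBK hx) s ⟨hs.1, lt_of_le_of_lt hs.2 ht1eps⟩
      exact ((ContinuousLinearMap.proj (R := ℝ) (φ := fun _ : Fin (d+1) => ℝ)
        (Fin.last d)).hasFDerivAt.comp_hasDerivAt s h1 :)
    apply strictMonoOn_of_deriv_pos (convex_Icc 0 t1)
    · exact (continuous_apply (Fin.last d)).comp_continuousOn (htraj x hx)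
    · intro s hs
      rw [interior_Icc] at hs
      have hs' : s ∈ Set.Icc (0:ℝ) t1 := ⟨hs.1.le, hs.2.le⟩
      rw [(hder s hs').deriv]
      exact hpos x hx s hs'
  -- Step 3: trajectories stay in a ball; Lipschitz bound for F
  have hCcomp : IsCompact ((fun p : (Fin d → ℝ) × ℝ => Φ p.1 p.2) '' (B ×ˢ Set.Icc 0 t1)) :=
    (hB.prod isCompact_Icc).image_of_continuousOn
      (hΦcont.mono (hsub ht1pos ht1eps))
  obtain ⟨R, hR⟩ := hCcomp.isBounded.subset_closedBall 0
  obtain ⟨Lip, hLip⟩ := exists_lipschitz_ball hF R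
  have hmem : ∀ x ∈ B, ∀ s ∈ Set.Icc (0:ℝ) t1, Φ x s ∈ Metric.closedBall 0 R := by
    intro x hx s hs
    exact hR ⟨(x, s), ⟨hx, hs⟩, rfl⟩
  -- Step 4: injectivity
  refine ⟨t1, ht1pos, ht1eps, ?_⟩
  have key : ∀ y ∈ {y : Fin (d+1) → ℝ | Fin.init y ∈ B ∧ y (Fin.last d) ∈ Set.Icc 0 t1},
      ∀ y' ∈ {y : Fin (d+1) → ℝ | Fin.init y ∈ B ∧ y (Fin.last d) ∈ Set.Icc 0 t1},
      y (Fin.last d) ≤ y' (Fin.last d) →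
      Φ (Fin.init y) (y (Fin.last d)) = Φ (Fin.init y') (y' (Fin.last d)) → y = y' := by
    rintro y ⟨hxB, hsI⟩ y' ⟨hxB', hsI'⟩ hle heq
    set x : Fin d → ℝ := Fin.init y
    set x' : Fin d → ℝ := Fin.init y'
    set s : ℝ := y (Fin.last d)
    set s' : ℝ := y' (Fin.last d)
    set δ : ℝ := s' - s with hδ
    have hδ0 : 0 ≤ δ := by simp [hδ]; linarith
    have hδs' : δ ≤ s' := by have := hsI.1; simp [hδ]; linarith
    -- ODE uniqueness backwards from time s'
    have huniq : Set.EqOn (Φ x') (fun u => Φ x (u - δ)) (Set.Icc δ s') := by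
      apply ODE_solution_unique_of_mem_Icc_left
        (v := fun _ z => F z) (s := fun _ => Metric.closedBall 0 R) (K := Lip)
        (fun _ _ => hLip)
      · exact (htraj x' hxB').mono (Set.Icc_subset_Icc (by linarith [hsI.1]) hsI'.2)
      · intro u hu
        have hu' : u ∈ Set.Ico (0:ℝ) eps :=
          ⟨le_trans hδ0 hu.1.le, lt_of_le_of_lt (le_trans hu.2 hsI'.2) ht1eps⟩
        exact (hΦode x' (hBK hxB') u hu').hasDerivWithinAt
      · intro u hu
        exact hmem x' hxB' u ⟨le_trans hδ0 hu.1.le, le_trans hu.2 hsI'.2⟩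
      · -- continuity of shifted solution
        refine (htraj x hxB).comp ((continuous_id.sub continuous_const).continuousOn) ?_
        intro u hu
        rw [Set.mem_Icc] at hu
        show u - δ ∈ Set.Icc 0 t1
        rw [Set.mem_Icc]
        exact ⟨by linarith [hu.1], by linarith [hu.2, hsI.2, hδ]⟩
      · intro u hu
        have hu' : u - δ ∈ Set.Ico (0:ℝ) eps := by
          constructor
          · linarith [hu.1.le]
          · have : u ≤ s' := hu.2
            have hsle : s ≤ t1 := hsI.2
            have : u - δ ≤ s := by simp [hδ]; linarith
            linarith
        have h1 : HasDerivAt (Φ x) (F (Φ x (u - δ))) (u - δ) := hΦode x (hBK hxB) (u - δ) hu'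
        have h2 : HasDerivAt (fun w : ℝ => w - δ) 1 u := (hasDerivAt_id u).sub_const δ
        have := HasDerivAt.scomp u h1 h2
        simpa [Function.comp_def] using this.hasDerivWithinAt
      · intro u hu
        have h1 : u - δ ∈ Set.Icc (0:ℝ) t1 := by
          constructor
          · linarith [hu.1.le]
          · have : u - δ ≤ s := by simp [hδ]; linarith [hu.2]
            linarith [hsI.2]
        exact hmem x hxB (u - δ) h1
      · show Φ x' s' = Φ x (s' - δ)
        have : s' - δ = s := by simp [hδ]
        rw [this]
        exact heq.symm
    have hδmem : δ ∈ Set.Icc δ s' := ⟨le_rfl, hδs'⟩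
    have hδval : Φ x' δ = Fin.snoc x 0 := by
      have := huniq hδmem
      simpa [hΦ0 x (hBK hxB)] using this
    have hδzero : δ = 0 := by
      by_contra hne
      have hδpos : 0 < δ := lt_of_le_of_ne hδ0 (Ne.symm hne)
      have hδt1 : δ ≤ t1 := by
        have := hsI'.2
        have := hsI.1
        simp only [hδ]; linarith
      have h2 : Φ x' 0 (Fin.last d) < Φ x' δ (Fin.last d) :=
        hmono x' hxB' (Set.left_mem_Icc.mpr (le_of_lt ht1pos) :
          (0:ℝ) ∈ Set.Icc 0 t1) ⟨le_of_lt hδpos, hδt1⟩ hδpos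
      rw [hΦ0 x' (hBK hxB'), hδval] at h2
      simp at h2
    have hss' : s = s' := by simp [hδ] at hδzero ⊢; linarith
    have hxx' : x = x' := by
      have : Φ x' δ = Fin.snoc x' 0 := by rw [hδzero, hΦ0 x' (hBK hxB')]
      rw [this] at hδval
      have := congrArg Fin.init hδval
      simpa [Fin.init_snoc] using this.symm
    calc y = Fin.snoc x s := (Fin.snoc_init_self y).symm
    _ = Fin.snoc x' s' := by rw [hxx', hss']
    _ = y' := Fin.snoc_init_self y'
  intro y hy y' hy' heq
  rcases le_total (y (Fin.last d)) (y' (Fin.last d)) with h | h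
  · exact key y hy y' hy' h heq
  · exact (key y' hy' y hy h heq.symm).symm

lemma slice_lintegral {d : ℕ} {B : Set (Fin d → ℝ)}
    (t : ℝ) (h : (Fin d → ℝ) → ENNReal) (hh : Measurable h) :
    ∫⁻ y in {y : Fin (d+1) → ℝ | Fin.init y ∈ B ∧ y (Fin.last d) ∈ Set.Icc 0 t},
      h (Fin.init y) = (∫⁻ x in B, h x) * ENNReal.ofReal t := by
  set e' := MeasurableEquiv.piFinSuccAbove (fun _ : Fin (d+1) => ℝ) (Fin.last d) with he'
  have hrem : ∀ y : Fin (d+1) → ℝ, Fin.removeNth (Fin.last d) y = Fin.init y := by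
    intro y; funext j; simp [Fin.removeNth, Fin.succAbove_last, Fin.init]
  have happ : ∀ y : Fin (d+1) → ℝ, e' y = (y (Fin.last d), Fin.init y) := by
    intro y
    have : e' y = (y (Fin.last d), Fin.removeNth (Fin.last d) y) := rfl
    rw [this, hrem]
  have hset : {y : Fin (d+1) → ℝ | Fin.init y ∈ B ∧ y (Fin.last d) ∈ Set.Icc 0 t}
      = e' ⁻¹' ((Set.Icc 0 t) ×ˢ B) := by
    ext y
    simp only [Set.mem_setOf_eq, Set.mem_preimage, happ, Set.mem_prod]
    tauto
  rw [hset]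
  have hmp := (volume_preserving_piFinSuccAbove (fun _ : Fin (d+1) => ℝ)
    (Fin.last d)).setLIntegral_comp_preimage_emb e'.measurableEmbedding
    (fun p : ℝ × (Fin d → ℝ) => h p.2) ((Set.Icc 0 t) ×ˢ B)
  calc ∫⁻ y in e' ⁻¹' (Set.Icc 0 t ×ˢ B), h (Fin.init y)
      = ∫⁻ y in e' ⁻¹' (Set.Icc 0 t ×ˢ B),
          (fun p : ℝ × (Fin d → ℝ) => h p.2) (e' y) := by
        apply lintegral_congr
        intro y
        rw [happ]
    _ = ∫⁻ p in (Set.Icc 0 t) ×ˢ B, h p.2 ∂(volume.prod volume) := hmp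
    _ = ∫⁻ p, h p.2 ∂((volume.restrict (Set.Icc 0 t)).prod (volume.restrict B)) := by
        rw [Measure.prod_restrict]
    _ = ∫⁻ s, ∫⁻ x, h x ∂(volume.restrict B) ∂(volume.restrict (Set.Icc 0 t)) := by
        exact lintegral_prod _ (hh.comp measurable_snd).aemeasurable
    _ = (∫⁻ x in B, h x) * volume (Set.Icc (0:ℝ) t) := by
        rw [lintegral_const, Measure.restrict_apply_univ]
    _ = (∫⁻ x in B, h x) * ENNReal.ofReal t := by
        rw [Real.volume_Icc, sub_zero]


/-- Flow from a hyperplane: if `Φ(x,s)` solves `y' = F(y)` with `Φ(x,0) = x` for `x` in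
an open piece `K` of the hyperplane `{y : y_d = 0}` (identified with `ℝ^d` via
`x ↦ (x,0)`), and `F·n > 0` on `K` (here `n = e_d` is the unit normal), then for any
compact Borel `B ⊆ K`, the volume of `B_t = Φ(B × [0,t])` satisfies
`lim_{t↓0} |B_t|/t = ∫_B F(x)·n(x) dx`. -/
theorem flow_volume_derivative (d : ℕ)
    (K : Set (Fin d → ℝ)) (hK : IsOpen K)
    (F : (Fin (d + 1) → ℝ) → (Fin (d + 1) → ℝ)) (hF : ContDiff ℝ 1 F)
    (hFpos : ∀ x ∈ K, 0 < F (Fin.snoc x 0) (Fin.last d))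
    (eps : ℝ) (heps : 0 < eps)
    (Φ : (Fin d → ℝ) → ℝ → (Fin (d + 1) → ℝ))
    (hΦ0 : ∀ x ∈ K, Φ x 0 = Fin.snoc x 0)
    (hΦode : ∀ x ∈ K, ∀ s ∈ Set.Ico (0 : ℝ) eps, HasDerivAt (Φ x) (F (Φ x s)) s)
    (hΦC1 : ContDiffOn ℝ 1 (fun p : (Fin d → ℝ) × ℝ => Φ p.1 p.2) (K ×ˢ Set.Ico 0 eps))
    (B : Set (Fin d → ℝ)) (hB : IsCompact B) (hBm : MeasurableSet B) (hBK : B ⊆ K) :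
    Tendsto
      (fun t : ℝ =>
        volume {y : Fin (d + 1) → ℝ | ∃ x ∈ B, ∃ s ∈ Set.Icc (0 : ℝ) t, y = Φ x s}
          / ENNReal.ofReal t)
      (nhdsWithin 0 (Set.Ioi 0))
      (nhds (∫⁻ x in B, ENNReal.ofReal (F (Fin.snoc x 0) (Fin.last d)))) := by
  classical
  set S : Set (Fin (d+1) → ℝ) := (sliceEqv d) ⁻¹' (K ×ˢ Set.Ico 0 eps) with hSdef
  set Ψ : (Fin (d+1) → ℝ) → (Fin (d+1) → ℝ) :=
    fun y => Φ (Fin.init y) (y (Fin.last d)) with hΨdef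
  set J₀ : (Fin d → ℝ) → ℝ := fun x => F (Fin.snoc x 0) (Fin.last d) with hJ₀def
  have hSU : UniqueDiffOn ℝ S := uniqueDiffOn_slice hK heps
  have hΨC1 : ContDiffOn ℝ 1 Ψ S := contDiffOn_slice hΦC1
  have hLhas : ∀ y ∈ S, HasFDerivWithinAt Ψ (fderivWithin ℝ Ψ S y) S y :=
    fun y hy => (hΨC1.differentiableOn one_ne_zero y hy).hasFDerivWithinAt
  have hLcont : ContinuousOn (fderivWithin ℝ Ψ S) S :=
    hΨC1.continuousOn_fderivWithin hSU le_rfl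
  have hmemS : ∀ {x : Fin d → ℝ}, x ∈ B → ∀ {s : ℝ}, s ∈ Set.Ico 0 eps →
      (Fin.snoc x s : Fin (d+1) → ℝ) ∈ S := by
    intro x hx s hs
    show (sliceEqv d) (Fin.snoc x s) ∈ K ×ˢ Set.Ico 0 eps
    rw [sliceEqv_apply]
    simp only [Fin.init_snoc, Fin.snoc_last]
    exact ⟨hBK hx, hs⟩
  have hinitc : Continuous (Fin.init : (Fin (d+1) → ℝ) → (Fin d → ℝ)) :=
    continuous_pi (fun i => continuous_apply _)
  have hsnocc : Continuous (fun x : Fin d → ℝ => (Fin.snoc x 0 : Fin (d+1) → ℝ)) := by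
    have : (fun x : Fin d → ℝ => (Fin.snoc x 0 : Fin (d+1) → ℝ))
        = fun x => (sliceEqv d).symm (x, 0) := by
      funext x; rw [sliceEqv_symm_apply]
    rw [this]
    exact (sliceEqv d).symm.continuous.comp (continuous_id.prodMk continuous_const)
  have hJ₀c : Continuous J₀ :=
    (continuous_apply (Fin.last d)).comp (hF.continuous.comp hsnocc)
  have hdet0 : ∀ x ∈ B, (fderivWithin ℝ Ψ S (Fin.snoc x 0)).det = J₀ x :=
    fun x hx => det_fderivWithin_slice hK heps hΦ0 hΦode hΦC1 (hBK hx)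
  -- the target integral is finite
  obtain ⟨M, hM⟩ := hB.exists_bound_of_continuousOn hJ₀c.continuousOn
  set I : ENNReal := ∫⁻ x in B, ENNReal.ofReal (J₀ x) with hIdef
  have hIfin : I ≠ ⊤ := by
    have h1 : I ≤ ENNReal.ofReal M * volume B := by
      rw [← setLIntegral_const B (ENNReal.ofReal M)]
      refine setLIntegral_mono measurable_const (fun x hx => ?_)
      exact ENNReal.ofReal_le_ofReal (le_trans (le_abs_self _)
        (by simpa [Real.norm_eq_abs] using hM x hx))
    exact (lt_of_le_of_lt h1
      (ENNReal.mul_lt_top ENNReal.ofReal_lt_top hB.measure_lt_top)).ne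
  refine (ENNReal.tendsto_nhds hIfin).mpr ?_
  intro ε hε
  -- choose a real ε' with ofReal ε' * volume B ≤ ε
  set vB : ℝ := (volume B).toReal with hvB
  have hvB0 : 0 ≤ vB := ENNReal.toReal_nonneg
  set ε' : ℝ := (min ε 1).toReal / (vB + 1) with hε'def
  have hminfin : min ε 1 ≠ ⊤ := by
    simp only [ne_eq, min_eq_top, not_and]
    intro; exact ENNReal.one_ne_top
  have hminpos : 0 < (min ε 1).toReal :=
    ENNReal.toReal_pos (lt_min hε zero_lt_one).ne' hminfin
  have hε'pos : 0 < ε' := div_pos hminpos (by linarith)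
  have hkey : ENNReal.ofReal ε' * volume B ≤ ε := by
    have hvolB : volume B = ENNReal.ofReal vB :=
      (ENNReal.ofReal_toReal hB.measure_lt_top.ne).symm
    rw [hvolB, ← ENNReal.ofReal_mul hε'pos.le]
    have h2 : ε' * vB ≤ (min ε 1).toReal := by
      rw [hε'def, div_mul_eq_mul_div, div_le_iff₀ (by linarith)]
      nlinarith [hminpos.le]
    calc ENNReal.ofReal (ε' * vB) ≤ ENNReal.ofReal ((min ε 1).toReal) :=
          ENNReal.ofReal_le_ofReal h2
      _ = min ε 1 := ENNReal.ofReal_toReal hminfin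
      _ ≤ ε := min_le_left _ _
  -- injectivity time
  obtain ⟨t0, ht0pos, ht0eps, hinj⟩ :=
    exists_inj_time hF hFpos heps hΦ0 hΦode hΦC1 hB hBK
  -- Jacobian-approximation time
  obtain ⟨t2, ht2pos, ht2le, ht2⟩ :=
    exists_small_time hB (b := eps/2) (by linarith)
      (g := fun p : (Fin d → ℝ) × ℝ =>
        abs (|(fderivWithin ℝ Ψ S ((sliceEqv d).symm p)).det| - J₀ p.1) - ε')
      (by
        apply ContinuousOn.sub
        apply ContinuousOn.abs
        apply ContinuousOn.sub
        · have hmaps : Set.MapsTo (fun p : (Fin d → ℝ) × ℝ => (sliceEqv d).symm p)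
              (B ×ˢ Set.Icc 0 (eps/2)) S := by
            intro p hp
            show (sliceEqv d).symm p ∈ S
            rw [sliceEqv_symm_apply]
            exact hmemS hp.1 ⟨hp.2.1, lt_of_le_of_lt hp.2.2 (by linarith)⟩
          have h1 : ContinuousOn (fun p : (Fin d → ℝ) × ℝ =>
              fderivWithin ℝ Ψ S ((sliceEqv d).symm p)) (B ×ˢ Set.Icc 0 (eps/2)) :=
            hLcont.comp ((sliceEqv d).symm.continuous.continuousOn) hmaps
          exact (continuous_abs.comp ContinuousLinearMap.continuous_det).comp_continuousOn h1
        · exact (hJ₀c.comp continuous_fst).continuousOn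
        · exact continuousOn_const)
      (by
        intro x hx
        simp only
        rw [sliceEqv_symm_apply]
        show abs (|(fderivWithin ℝ Ψ S (Fin.snoc x 0)).det| - J₀ x) - ε' < 0
        rw [hdet0 x hx, abs_of_pos (hFpos x (hBK hx))]
        simp [hε'pos, hJ₀def])
  -- combine the two time scales
  set tm : ℝ := min t0 t2 with htm
  have htmpos : 0 < tm := lt_min ht0pos ht2pos
  have htmeps : tm < eps := lt_of_le_of_lt (min_le_left _ _) ht0eps
  filter_upwards [Ioc_mem_nhdsGT_of_mem ⟨le_refl (0:ℝ), htmpos⟩] with t ht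
  have htpos : 0 < t := ht.1
  have htt0 : t ≤ t0 := le_trans ht.2 (min_le_left _ _)
  have htt2 : t ≤ t2 := le_trans ht.2 (min_le_right _ _)
  have hteps : t < eps := lt_of_le_of_lt ht.2 htmeps
  set St : Set (Fin (d+1) → ℝ) :=
    {y | Fin.init y ∈ B ∧ y (Fin.last d) ∈ Set.Icc 0 t} with hSt
  have hStS : St ⊆ S := by
    intro y hy
    show (sliceEqv d) y ∈ K ×ˢ Set.Ico 0 eps
    rw [sliceEqv_apply]
    exact ⟨hBK hy.1, hy.2.1, lt_of_le_of_lt hy.2.2 hteps⟩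
  have hStm : MeasurableSet St := by
    have hSteq : St = (sliceEqv d) ⁻¹' (B ×ˢ Set.Icc 0 t) := by
      ext y
      simp only [hSt, Set.mem_setOf_eq, Set.mem_preimage, sliceEqv_apply, Set.mem_prod]
    rw [hSteq]
    exact (sliceEqv d).continuous.measurable (hBm.prod measurableSet_Icc)
  have hsetq : {y : Fin (d+1) → ℝ | ∃ x ∈ B, ∃ s ∈ Set.Icc (0:ℝ) t, y = Φ x s}
      = Ψ '' St := by
    ext y
    constructor
    · rintro ⟨x, hx, s, hs, rfl⟩
      refine ⟨Fin.snoc x s, ⟨?_, ?_⟩, ?_⟩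
      · rw [Fin.init_snoc]; exact hx
      · rw [Fin.snoc_last]; exact hs
      · simp only [hΨdef, Fin.init_snoc, Fin.snoc_last]
    · rintro ⟨z, hz, rfl⟩
      exact ⟨Fin.init z, hz.1, z (Fin.last d), hz.2, rfl⟩
  have hinj' : Set.InjOn Ψ St := by
    refine Set.InjOn.mono ?_ hinj
    intro y hy
    exact ⟨hy.1, hy.2.1, le_trans hy.2.2 htt0⟩
  have hchg : volume (Ψ '' St) = ∫⁻ y in St, ENNReal.ofReal |(fderivWithin ℝ Ψ S y).det| :=
    (lintegral_abs_det_fderiv_eq_addHaar_image volume hStm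
      (fun y hy => (hLhas y (hStS hy)).mono hStS) hinj').symm
  have hbound : ∀ y ∈ St, abs (|(fderivWithin ℝ Ψ S y).det| - J₀ (Fin.init y)) < ε' := by
    intro y hy
    have h := ht2 (Fin.init y) hy.1 (y (Fin.last d)) ⟨hy.2.1, le_trans hy.2.2 htt2⟩
    have h2 : (sliceEqv d).symm (Fin.init y, y (Fin.last d)) = y := by
      rw [sliceEqv_symm_apply]
      exact Fin.snoc_init_self y
    simp only [h2] at h
    linarith [h]
  have hmeasup : Measurable fun y : Fin (d+1) → ℝ =>
      ENNReal.ofReal (J₀ (Fin.init y) + ε') :=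
    (ENNReal.continuous_ofReal.comp ((hJ₀c.comp hinitc).add continuous_const)).measurable
  have hupper : volume (Ψ '' St)
      ≤ (∫⁻ x in B, ENNReal.ofReal (J₀ x + ε')) * ENNReal.ofReal t := by
    rw [hchg, ← slice_lintegral t (fun x => ENNReal.ofReal (J₀ x + ε'))
      (ENNReal.continuous_ofReal.comp (hJ₀c.add continuous_const)).measurable]
    refine setLIntegral_mono hmeasup (fun y hy => ?_)
    refine ENNReal.ofReal_le_ofReal ?_
    have := hbound y hy
    rw [abs_lt] at this
    linarith [this.2]
  have hlower : (∫⁻ x in B, ENNReal.ofReal (J₀ x - ε')) * ENNReal.ofReal t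
      ≤ volume (Ψ '' St) := by
    rw [hchg, ← slice_lintegral t (fun x => ENNReal.ofReal (J₀ x - ε'))
      (ENNReal.continuous_ofReal.comp (hJ₀c.sub continuous_const)).measurable]
    refine setLIntegral_mono' hStm (fun y hy => ?_)
    refine ENNReal.ofReal_le_ofReal ?_
    have := hbound y hy
    rw [abs_lt] at this
    linarith [this.1]
  have hup2 : (∫⁻ x in B, ENNReal.ofReal (J₀ x + ε')) ≤ I + ε := by
    calc ∫⁻ x in B, ENNReal.ofReal (J₀ x + ε')
        ≤ ∫⁻ x in B, (ENNReal.ofReal (J₀ x) + ENNReal.ofReal ε') := by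
          refine setLIntegral_mono ((ENNReal.continuous_ofReal.comp
            hJ₀c).measurable.add measurable_const) (fun x _ => ENNReal.ofReal_add_le)
      _ = I + ENNReal.ofReal ε' * volume B := by
          rw [lintegral_add_right _ measurable_const, setLIntegral_const]
      _ ≤ I + ε := add_le_add le_rfl hkey
  have hlow2 : I - ε ≤ ∫⁻ x in B, ENNReal.ofReal (J₀ x - ε') := by
    rw [tsub_le_iff_right]
    calc I ≤ ∫⁻ x in B, (ENNReal.ofReal (J₀ x - ε') + ENNReal.ofReal ε') := by
          refine setLIntegral_mono ((ENNReal.continuous_ofReal.comp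
            (hJ₀c.sub continuous_const)).measurable.add measurable_const) (fun x _ => ?_)
          calc ENNReal.ofReal (J₀ x) = ENNReal.ofReal ((J₀ x - ε') + ε') := by ring_nf
            _ ≤ _ := ENNReal.ofReal_add_le
      _ = (∫⁻ x in B, ENNReal.ofReal (J₀ x - ε')) + ENNReal.ofReal ε' * volume B := by
          rw [lintegral_add_right _ measurable_const, setLIntegral_const]
      _ ≤ (∫⁻ x in B, ENNReal.ofReal (J₀ x - ε')) + ε := add_le_add le_rfl hkey
  have hsetq' : {y : Fin (d+1) → ℝ | ∃ x ∈ B, ∃ s ∈ Set.Icc (0:ℝ) t, y = Φ x s}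
      = Ψ '' St := hsetq
  rw [Set.mem_Icc]
  constructor
  · refine le_trans hlow2 ?_
    rw [hsetq', ENNReal.le_div_iff_mul_le
      (Or.inl (by rw [ne_eq, ENNReal.ofReal_eq_zero]; push_neg; exact htpos))
      (Or.inl ENNReal.ofReal_ne_top)]
    exact hlower
  · rw [hsetq']
    exact le_trans (ENNReal.div_le_of_le_mul hupper) hup2
end

section
/- Let μ_n denote normalized Lebesgue measure (density n!) on the simplex Δ_n = {0 ≤ x_1 ≤ ... ≤ x_n ≤ 1}. For any Borel set B ⊆ Δ_n and t > 0, the μ_n-measure of {x ∈ Δ_n : exp(sA_n)x ∈ Δ_n for all s ∈ [0,t] and exp(tA_n)x ∈ B} equals e^{-2nt}·μ_n(B). -/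
open Matrix MeasureTheory ENNReal

/-- The simplex of `n` free coordinates `0 ≤ x_1 ≤ ⋯ ≤ x_n ≤ 1`. -/
def freeSimplex (n : ℕ) : Set (Fin n → ℝ) :=
  {x | Monotone x ∧ ∀ i, x i ∈ Set.Icc (0 : ℝ) 1}

/-- The time-`t` flow map `exp(tA_n)` acting on the `n` free coordinates, with the
frozen endpoint particles `x_0 = 0` and `x_{n+1} = 1` appended. -/
noncomputable def flowMap (n : ℕ) (t : ℝ) (x : Fin n → ℝ) : Fin n → ℝ :=
  fun i =>
    (NormedSpace.exp (t • coarseningMatrix n)).mulVec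
      (Fin.cons 0 (Fin.snoc x 1)) i.succ.castSucc

namespace CoarsenAux

/-! ### Generic lemmas about matrix exponentials -/

variable {m p : Type*} [Fintype m] [DecidableEq m] [Fintype p] [DecidableEq p]

lemma exp_hasSum (A : Matrix m m ℝ) :
    HasSum (fun k : ℕ => ((k.factorial : ℝ))⁻¹ • A ^ k) (NormedSpace.exp A) := by
  letI : SeminormedRing (Matrix m m ℝ) := Matrix.linftyOpSemiNormedRing
  letI : NormedRing (Matrix m m ℝ) := Matrix.linftyOpNormedRing
  letI : NormedAlgebra ℝ (Matrix m m ℝ) := Matrix.linftyOpNormedAlgebra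
  have h := (NormedSpace.expSeries_summable' (𝕂 := ℝ) A).hasSum
  rw [NormedSpace.exp_eq_tsum ℝ]
  exact h

lemma exp_entry_hasSum (A : Matrix m m ℝ) (i j : m) :
    HasSum (fun k : ℕ => ((k.factorial : ℝ))⁻¹ * (A ^ k) i j) (NormedSpace.exp A i j) := by
  have h := exp_hasSum A
  have h2 := (Pi.hasSum.mp ((Pi.hasSum.mp h) i)) j
  simpa [Matrix.smul_apply, smul_eq_mul] using h2

lemma exp_entry (A : Matrix m m ℝ) (i j : m) :
    NormedSpace.exp A i j = ∑' k : ℕ, ((k.factorial : ℝ))⁻¹ * (A ^ k) i j :=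
  (exp_entry_hasSum A i j).tsum_eq.symm

lemma pow_entry_nonneg {A : Matrix m m ℝ} (hA : ∀ i j, 0 ≤ A i j) (k : ℕ) :
    ∀ i j, 0 ≤ (A ^ k) i j := by
  induction k with
  | zero =>
    intro i j
    rw [pow_zero, Matrix.one_apply]
    split <;> norm_num
  | succ k ih =>
    intro i j
    rw [pow_succ, Matrix.mul_apply]
    exact Finset.sum_nonneg fun c _ => mul_nonneg (ih i c) (hA c j)

lemma exp_entry_nonneg {A : Matrix m m ℝ} (hA : ∀ i j, 0 ≤ A i j) (i j : m) :
    0 ≤ NormedSpace.exp A i j := by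
  rw [exp_entry]
  exact tsum_nonneg fun k =>
    mul_nonneg (inv_nonneg.mpr (Nat.cast_nonneg _)) (pow_entry_nonneg hA k i j)

lemma exp_intertwine {A : Matrix m m ℝ} {B : Matrix m p ℝ} {C : Matrix p p ℝ}
    (h : A * B = B * C) :
    NormedSpace.exp A * B = B * NormedSpace.exp C := by
  have hpow : ∀ k : ℕ, A ^ k * B = B * C ^ k := by
    intro k
    induction k with
    | zero => simp
    | succ k ih => rw [pow_succ, pow_succ, Matrix.mul_assoc, h, ← Matrix.mul_assoc, ih,
        Matrix.mul_assoc]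
  let f : Matrix m m ℝ →ₗ[ℝ] Matrix m p ℝ :=
    { toFun := fun X => X * B
      map_add' := fun X Y => Matrix.add_mul X Y B
      map_smul' := fun c X => Matrix.smul_mul c X B }
  let g : Matrix p p ℝ →ₗ[ℝ] Matrix m p ℝ :=
    { toFun := fun X => B * X
      map_add' := fun X Y => Matrix.mul_add B X Y
      map_smul' := fun c X => Matrix.mul_smul B c X }
  have h1 := (exp_hasSum A).mapL (LinearMap.toContinuousLinearMap f)
  have h2 := (exp_hasSum C).mapL (LinearMap.toContinuousLinearMap g)
  have e1 : (fun k : ℕ => (LinearMap.toContinuousLinearMap f) (((k.factorial : ℝ))⁻¹ • A ^ k))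
      = fun k : ℕ => ((k.factorial : ℝ))⁻¹ • (B * C ^ k) := by
    funext k
    simp only [LinearMap.coe_toContinuousLinearMap', LinearMap.coe_mk, AddHom.coe_mk, f,
      Matrix.smul_mul, hpow k]
  have e2 : (fun k : ℕ => (LinearMap.toContinuousLinearMap g) (((k.factorial : ℝ))⁻¹ • C ^ k))
      = fun k : ℕ => ((k.factorial : ℝ))⁻¹ • (B * C ^ k) := by
    funext k
    simp only [LinearMap.coe_toContinuousLinearMap', LinearMap.coe_mk, AddHom.coe_mk, g,
      Matrix.mul_smul]
  rw [e1] at h1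
  rw [e2] at h2
  exact h1.unique h2

lemma exp_row_boundary {A : Matrix m m ℝ} {r : m} (hr : A r = 0) (j : m) :
    NormedSpace.exp A r j = (1 : Matrix m m ℝ) r j := by
  rw [exp_entry, tsum_eq_single 0]
  · simp
  · intro k hk
    obtain ⟨k, rfl⟩ := Nat.exists_eq_succ_of_ne_zero hk
    rw [pow_succ', Matrix.mul_apply]
    have hz : ∀ c, A r c = 0 := fun c => congrFun hr c
    simp [hz]

lemma exp_mulVec_boundary {A : Matrix m m ℝ} {r : m} (hr : A r = 0) (w : m → ℝ) :
    (NormedSpace.exp A).mulVec w r = w r := by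
  have h : (NormedSpace.exp A).mulVec w r = (1 : Matrix m m ℝ).mulVec w r := by
    show (NormedSpace.exp A) r ⬝ᵥ w = (1 : Matrix m m ℝ) r ⬝ᵥ w
    rw [funext (exp_row_boundary hr)]
  rw [h, Matrix.one_mulVec]

lemma mulVec_nonneg {M : Matrix m m ℝ} (hM : ∀ i j, 0 ≤ M i j)
    {u : m → ℝ} (hu : ∀ j, 0 ≤ u j) (i : m) : 0 ≤ M.mulVec u i := by
  show (0 : ℝ) ≤ ∑ j, M i j * u j
  exact Finset.sum_nonneg fun j _ => mul_nonneg (hM i j) (hu j)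

/-- Determinant of the exponential of a real symmetric matrix. -/
lemma det_exp_of_isHermitian {N : ℕ} {A : Matrix (Fin N) (Fin N) ℝ} (hA : A.IsHermitian) :
    (NormedSpace.exp A).det = Real.exp A.trace := by
  have spec := hA.spectral_theorem
  set U : Matrix (Fin N) (Fin N) ℝ := (hA.eigenvectorUnitary : Matrix (Fin N) (Fin N) ℝ) with hU
  have hU1 : U * star U = 1 := Matrix.mem_unitaryGroup_iff.mp hA.eigenvectorUnitary.2
  have hU2 : star U * U = 1 := Matrix.mem_unitaryGroup_iff'.mp hA.eigenvectorUnitary.2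
  let u : (Matrix (Fin N) (Fin N) ℝ)ˣ := ⟨U, star U, hU1, hU2⟩
  have hexp : NormedSpace.exp A
      = U * NormedSpace.exp (Matrix.diagonal (RCLike.ofReal ∘ hA.eigenvalues)) * star U := by
    conv_lhs => rw [spec, Unitary.conjStarAlgAut_apply]
    exact Matrix.exp_units_conj u _
  have hdiag : NormedSpace.exp (Matrix.diagonal (RCLike.ofReal ∘ hA.eigenvalues))
      = Matrix.diagonal fun i => Real.exp (hA.eigenvalues i) := by
    rw [Matrix.exp_diagonal]
    refine congrArg Matrix.diagonal (funext fun i => ?_)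
    rw [Pi.coe_exp, ← Real.exp_eq_exp_ℝ]
    simp
  have htr : A.trace = ∑ i, hA.eigenvalues i := by
    conv_lhs => rw [spec, Unitary.conjStarAlgAut_apply]
    rw [Matrix.trace_mul_cycle, hU2, Matrix.one_mul, Matrix.trace_diagonal]
    simp
  rw [hexp, Matrix.det_mul, Matrix.det_mul, hdiag, Matrix.det_diagonal]
  have h1 : U.det * (star U).det = 1 := by rw [← Matrix.det_mul, hU1, Matrix.det_one]
  have h2 : U.det * (∏ i, Real.exp (hA.eigenvalues i)) * (star U).det
      = (U.det * (star U).det) * ∏ i, Real.exp (hA.eigenvalues i) := by ring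
  rw [h2, h1, one_mul, ← Real.exp_sum, htr]

/-! ### The specific matrices -/

variable {n : ℕ}

/-- Embedding of interior indices. -/
def emb (n : ℕ) (i : Fin n) : Fin (n + 2) := i.succ.castSucc

lemma emb_val (i : Fin n) : (emb n i : ℕ) = (i : ℕ) + 1 := rfl

lemma emb_inj {i j : Fin n} (h : emb n i = emb n j) : i = j := by
  have := congrArg Fin.val h
  rw [emb_val, emb_val] at this
  exact Fin.ext (by omega)

lemma emb_mono {i j : Fin n} (h : i ≤ j) : emb n i ≤ emb n j := by
  rw [Fin.le_def, emb_val, emb_val]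
  exact Nat.add_le_add_right h 1

lemma dot_single_sub {ι : Type*} [Fintype ι] [DecidableEq ι] (a b : ι) (v : ι → ℝ) :
    (Pi.single a (1 : ℝ) - Pi.single b 1) ⬝ᵥ v = v a - v b := by
  rw [sub_dotProduct, single_dotProduct, single_dotProduct, one_mul, one_mul]

/-- The discrete difference operator. -/
def Dmat (n : ℕ) : Matrix (Fin (n + 1)) (Fin (n + 2)) ℝ :=
  fun i => Pi.single i.succ 1 - Pi.single i.castSucc 1

/-- The (negative) discrete divergence with Dirichlet boundary rows. -/
def Bmat (n : ℕ) : Matrix (Fin (n + 2)) (Fin (n + 1)) ℝ :=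
  fun m j =>
    if (m : ℕ) = 0 ∨ (m : ℕ) = n + 1 then 0
    else if (j : ℕ) + 1 = (m : ℕ) then 1
    else if (j : ℕ) = (m : ℕ) then -1
    else 0

lemma L_row_zero : coarseningMatrix n 0 = 0 := by
  funext j; simp [coarseningMatrix]

lemma L_row_last : coarseningMatrix n (Fin.last (n + 1)) = 0 := by
  funext j; simp [coarseningMatrix]

lemma sum_boundary_zero (g : Fin (n + 2) → ℝ) (h0 : g 0 = 0) (hl : g (Fin.last (n + 1)) = 0) :
    ∑ m, g m = ∑ i : Fin n, g (emb n i) := by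
  rw [Fin.sum_univ_succ, h0, zero_add, Fin.sum_univ_castSucc, Fin.succ_last, hl, add_zero]
  exact Finset.sum_congr rfl fun i _ => by rw [Fin.succ_castSucc]; rfl

lemma L_factor : coarseningMatrix n = Bmat n * Dmat n := by
  funext mm jj
  rw [Matrix.mul_apply]
  by_cases hb : (mm : ℕ) = 0 ∨ (mm : ℕ) = n + 1
  · rw [show coarseningMatrix n mm jj = 0 from if_pos hb]
    refine (Finset.sum_eq_zero fun k _ => ?_).symm
    rw [show Bmat n mm k = 0 from if_pos hb, zero_mul]
  · push_neg at hb
    obtain ⟨h1, h2⟩ := hb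
    have key : ∑ k, Bmat n mm k * Dmat n k jj
        = Dmat n ⟨(mm : ℕ) - 1, by omega⟩ jj - Dmat n ⟨(mm : ℕ), by omega⟩ jj := by
      have hrow : Bmat n mm = Pi.single (⟨(mm : ℕ) - 1, by omega⟩ : Fin (n + 1)) (1 : ℝ)
          - Pi.single ⟨(mm : ℕ), by omega⟩ 1 := by
        funext k
        simp only [Bmat, Pi.sub_apply, Pi.single_apply, Fin.ext_iff]
        have := mm.isLt
        split_ifs <;> first | omega | norm_num
      rw [hrow]
      exact dot_single_sub _ _ _
    rw [key]
    simp only [Dmat, Pi.sub_apply, Pi.single_apply, coarseningMatrix, Fin.ext_iff,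
      Fin.val_succ, Fin.coe_castSucc]
    have := mm.isLt
    have := jj.isLt
    split_ifs <;> first | omega | norm_num

lemma DB_apply (i j : Fin (n + 1)) :
    (Dmat n * Bmat n) i j = Bmat n i.succ j - Bmat n i.castSucc j := by
  rw [Matrix.mul_apply]
  exact dot_single_sub i.succ i.castSucc fun k => Bmat n k j

lemma P_entries_nonneg (i j : Fin (n + 1)) :
    0 ≤ ((2 : ℝ) • (1 : Matrix (Fin (n + 1)) (Fin (n + 1)) ℝ) - Dmat n * Bmat n) i j := by
  have hij := DB_apply (n := n) i j
  simp only [Matrix.sub_apply, Matrix.smul_apply, Matrix.one_apply, hij, Bmat, smul_eq_mul,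
    Fin.ext_iff, Fin.val_succ, Fin.coe_castSucc]
  have := i.isLt
  have := j.isLt
  split_ifs <;> first | omega | norm_num

lemma ND_eq_DL : Dmat n * Bmat n * Dmat n = Dmat n * coarseningMatrix n := by
  rw [L_factor, ← Matrix.mul_assoc]

lemma Dmat_mulVec (v : Fin (n + 2) → ℝ) (k : Fin (n + 1)) :
    (Dmat n).mulVec v k = v k.succ - v k.castSucc :=
  dot_single_sub _ _ v

/-! ### Order preservation of the backward flow -/

lemma exp_neg_entries_nonneg {s : ℝ} (hs : 0 ≤ s) (i j : Fin (n + 1)) :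
    0 ≤ NormedSpace.exp ((-s) • (Dmat n * Bmat n)) i j := by
  have hsplit : (-s) • (Dmat n * Bmat n)
      = (-(2 * s)) • (1 : Matrix (Fin (n + 1)) (Fin (n + 1)) ℝ)
        + s • ((2 : ℝ) • (1 : Matrix (Fin (n + 1)) (Fin (n + 1)) ℝ) - Dmat n * Bmat n) := by
    module
  rw [hsplit, Matrix.exp_add_of_commute _ _ ((Commute.one_left _).smul_left _),
    Matrix.smul_one_eq_diagonal, Matrix.exp_diagonal, Matrix.diagonal_mul]
  refine mul_nonneg ?_ (exp_entry_nonneg (fun a b => ?_) i j)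
  · rw [Pi.coe_exp, ← Real.exp_eq_exp_ℝ]
    positivity
  · rw [Matrix.smul_apply, smul_eq_mul]
    exact mul_nonneg hs (P_entries_nonneg a b)

lemma monotone_exp_neg_smul {s : ℝ} (hs : 0 ≤ s) {w : Fin (n + 2) → ℝ} (hw : Monotone w) :
    Monotone ((NormedSpace.exp ((-s) • coarseningMatrix n)).mulVec w) := by
  rw [Fin.monotone_iff_le_succ]
  intro k
  rw [← sub_nonneg, ← Dmat_mulVec]
  have hcomm : NormedSpace.exp ((-s) • (Dmat n * Bmat n)) * Dmat n
      = Dmat n * NormedSpace.exp ((-s) • coarseningMatrix n) :=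
    exp_intertwine (by rw [Matrix.smul_mul, Matrix.mul_smul, ND_eq_DL])
  have hvec : (Dmat n).mulVec ((NormedSpace.exp ((-s) • coarseningMatrix n)).mulVec w)
      = (NormedSpace.exp ((-s) • (Dmat n * Bmat n))).mulVec ((Dmat n).mulVec w) := by
    rw [Matrix.mulVec_mulVec, Matrix.mulVec_mulVec, hcomm]
  rw [hvec]
  refine mulVec_nonneg (exp_neg_entries_nonneg hs) (fun j => ?_) k
  rw [Dmat_mulVec, sub_nonneg]
  exact hw (le_of_lt (Fin.castSucc_lt_succ (i := j)))

/-! ### The appended vector -/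

/-- The configuration with frozen endpoints appended. -/
def wvec (x : Fin n → ℝ) : Fin (n + 2) → ℝ := Fin.cons 0 (Fin.snoc x 1)

lemma wvec_zero (x : Fin n → ℝ) : wvec x 0 = 0 := rfl

lemma wvec_last (x : Fin n → ℝ) : wvec x (Fin.last (n + 1)) = 1 := by
  rw [show Fin.last (n + 1) = (Fin.last n).succ from (Fin.succ_last n).symm, wvec,
    Fin.cons_succ, Fin.snoc_last]

lemma wvec_emb (x : Fin n → ℝ) (i : Fin n) : wvec x (emb n i) = x i := by
  rw [wvec, emb, ← Fin.succ_castSucc, Fin.cons_succ, Fin.snoc_castSucc]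

lemma eq_wvec_of_boundary {u : Fin (n + 2) → ℝ} (h0 : u 0 = 0) (hl : u (Fin.last (n + 1)) = 1) :
    u = wvec fun i => u (emb n i) := by
  funext j
  refine Fin.cases ?_ (fun k => ?_) j
  · rw [h0]; rfl
  · refine Fin.lastCases ?_ (fun c => ?_) k
    · rw [Fin.succ_last, hl, wvec_last]
    · rw [Fin.succ_castSucc, show c.succ.castSucc = emb n c from rfl, wvec_emb]

lemma wvec_monotone {x : Fin n → ℝ} (hx : x ∈ freeSimplex n) : Monotone (wvec x) := by
  have hsnoc : ∀ j : Fin (n + 1), (Fin.snoc x (1 : ℝ) : Fin (n + 1) → ℝ) j ∈ Set.Icc (0 : ℝ) 1 := by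
    intro j
    refine Fin.lastCases ?_ (fun c => ?_) j
    · rw [Fin.snoc_last]; exact ⟨zero_le_one, le_refl 1⟩
    · rw [Fin.snoc_castSucc]; exact hx.2 c
  rw [Fin.monotone_iff_le_succ]
  intro k
  refine Fin.cases ?_ (fun c => ?_) k
  · rw [Fin.castSucc_zero, wvec_zero, wvec, Fin.cons_succ]
    exact (hsnoc 0).1
  · rw [← Fin.succ_castSucc, wvec, Fin.cons_succ, Fin.cons_succ, Fin.snoc_castSucc]
    rcases Fin.eq_castSucc_or_eq_last c.succ with ⟨j, hj⟩ | hj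
    · rw [hj, Fin.snoc_castSucc]
      refine hx.1 ?_
      have : (c : ℕ) + 1 = (j : ℕ) := by
        have := congrArg Fin.val hj
        simpa using this
      exact Fin.le_def.mpr (by omega)
    · rw [hj, Fin.snoc_last]
      exact (hx.2 c).2

/-! ### Properties of the flow -/

lemma smul_L_row_zero (r : ℝ) : (r • coarseningMatrix n) 0 = 0 := by
  funext j
  simp [Matrix.smul_apply, L_row_zero]

lemma smul_L_row_last (r : ℝ) : (r • coarseningMatrix n) (Fin.last (n + 1)) = 0 := by
  funext j
  simp [Matrix.smul_apply, L_row_last]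

lemma flowMap_eq (s : ℝ) (x : Fin n → ℝ) :
    flowMap n s x
      = fun i => (NormedSpace.exp (s • coarseningMatrix n)).mulVec (wvec x) (emb n i) := rfl

lemma flowMap_zero (x : Fin n → ℝ) : flowMap n 0 x = x := by
  funext i
  show (NormedSpace.exp ((0 : ℝ) • coarseningMatrix n)).mulVec (wvec x) (emb n i) = x i
  rw [zero_smul, NormedSpace.exp_zero, Matrix.one_mulVec, wvec_emb]

lemma flow_mem_simplex {t : ℝ} (x : Fin n → ℝ) (htx : flowMap n t x ∈ freeSimplex n)
    {s : ℝ} (hs : 0 ≤ s) (hst : s ≤ t) : flowMap n s x ∈ freeSimplex n := by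
  set u := (NormedSpace.exp (t • coarseningMatrix n)).mulVec (wvec x) with hu
  have hu0 : u 0 = 0 := by
    rw [hu, exp_mulVec_boundary (smul_L_row_zero t), wvec_zero]
  have hul : u (Fin.last (n + 1)) = 1 := by
    rw [hu, exp_mulVec_boundary (smul_L_row_last t), wvec_last]
  have hyu : u = wvec (flowMap n t x) := eq_wvec_of_boundary hu0 hul
  have hflow : flowMap n s x
      = fun i => (NormedSpace.exp ((-(t - s)) • coarseningMatrix n)).mulVec u (emb n i) := by
    rw [flowMap_eq, hu, Matrix.mulVec_mulVec]
    have hcomm : Commute ((-(t - s)) • coarseningMatrix n) (t • coarseningMatrix n) :=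
      ((Commute.refl (coarseningMatrix n)).smul_left _).smul_right _
    rw [← Matrix.exp_add_of_commute _ _ hcomm]
    have : (-(t - s)) • coarseningMatrix n + t • coarseningMatrix n
        = s • coarseningMatrix n := by module
    rw [this]
  set v := (NormedSpace.exp ((-(t - s)) • coarseningMatrix n)).mulVec u with hv
  have hvmono : Monotone v := by
    rw [hv, hyu]
    exact monotone_exp_neg_smul (by linarith) (wvec_monotone htx)
  have hv0 : v 0 = 0 := by
    rw [hv, exp_mulVec_boundary (smul_L_row_zero _), hu0]
  have hvl : v (Fin.last (n + 1)) = 1 := by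
    rw [hv, exp_mulVec_boundary (smul_L_row_last _), hul]
  rw [hflow]
  constructor
  · exact fun i j hij => hvmono (emb_mono hij)
  · intro i
    exact ⟨hv0 ▸ hvmono (Fin.zero_le _), hvl ▸ hvmono (Fin.le_last _)⟩

/-! ### The affine structure of the flow and its Jacobian -/

lemma pow_submatrix {A : Matrix (Fin (n + 2)) (Fin (n + 2)) ℝ} (h0 : A 0 = 0)
    (hl : A (Fin.last (n + 1)) = 0) (k : ℕ) :
    (A ^ k).submatrix (emb n) (emb n) = (A.submatrix (emb n) (emb n)) ^ k := by
  induction k with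
  | zero =>
    funext i j
    rw [pow_zero, pow_zero, Matrix.submatrix_apply, Matrix.one_apply, Matrix.one_apply]
    by_cases h : i = j
    · rw [if_pos (by rw [h]), if_pos h]
    · rw [if_neg (fun hc => h (emb_inj hc)), if_neg h]
  | succ k ih =>
    funext i j
    rw [pow_succ, pow_succ, Matrix.submatrix_apply, Matrix.mul_apply, Matrix.mul_apply]
    rw [sum_boundary_zero (fun c => (A ^ k) (emb n i) c * A c (emb n j))
      (by simp [h0]) (by simp [hl])]
    exact Finset.sum_congr rfl fun c _ => by rw [← ih]; rfl

lemma exp_submatrix {A : Matrix (Fin (n + 2)) (Fin (n + 2)) ℝ} (h0 : A 0 = 0)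
    (hl : A (Fin.last (n + 1)) = 0) :
    (NormedSpace.exp A).submatrix (emb n) (emb n)
      = NormedSpace.exp (A.submatrix (emb n) (emb n)) := by
  funext i j
  rw [Matrix.submatrix_apply, exp_entry, exp_entry]
  refine tsum_congr fun k => ?_
  rw [← pow_submatrix h0 hl k]
  rfl

lemma L_emb_symm (i j : Fin n) :
    coarseningMatrix n (emb n j) (emb n i) = coarseningMatrix n (emb n i) (emb n j) := by
  simp only [coarseningMatrix, Fin.ext_iff, emb_val, Nat.add_one_ne_zero, false_or, Nat.add_right_cancel_iff]
  have := i.isLt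
  have := j.isLt
  split_ifs <;> first | omega | norm_num

lemma A'_herm (t : ℝ) :
    (((t • coarseningMatrix n)).submatrix (emb n) (emb n)).IsHermitian := by
  show _ = _
  funext i j
  rw [Matrix.conjTranspose_apply, Matrix.submatrix_apply, Matrix.submatrix_apply,
    Matrix.smul_apply, Matrix.smul_apply, star_trivial, L_emb_symm]

lemma L_emb_diag (i : Fin n) : coarseningMatrix n (emb n i) (emb n i) = 2 := by
  have h1 : ¬((emb n i : ℕ) = 0 ∨ (emb n i : ℕ) = n + 1) := by
    rw [emb_val]
    have := i.isLt
    omega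
  simp only [coarseningMatrix]
  rw [if_neg h1]
  simp

lemma trace_A' (t : ℝ) :
    ((t • coarseningMatrix n).submatrix (emb n) (emb n)).trace = 2 * n * t := by
  have hdiag : ∀ i : Fin n,
      ((t • coarseningMatrix n).submatrix (emb n) (emb n)).diag i = 2 * t := by
    intro i
    simp only [Matrix.diag, Matrix.submatrix_apply, Matrix.smul_apply, L_emb_diag, smul_eq_mul]
    ring
  rw [Matrix.trace, Finset.sum_congr rfl fun i _ => hdiag i, Finset.sum_const,
    Finset.card_univ, Fintype.card_fin, nsmul_eq_mul]
  ring

lemma iota_zero (x : Fin n → ℝ) : (Fin.cons 0 (Fin.snoc x 0) : Fin (n + 2) → ℝ) 0 = 0 := rfl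

lemma iota_last (x : Fin n → ℝ) :
    (Fin.cons 0 (Fin.snoc x 0) : Fin (n + 2) → ℝ) (Fin.last (n + 1)) = 0 := by
  rw [show Fin.last (n + 1) = (Fin.last n).succ from (Fin.succ_last n).symm,
    Fin.cons_succ, Fin.snoc_last]

lemma iota_emb (x : Fin n → ℝ) (i : Fin n) :
    (Fin.cons 0 (Fin.snoc x 0) : Fin (n + 2) → ℝ) (emb n i) = x i := by
  rw [emb, ← Fin.succ_castSucc, Fin.cons_succ, Fin.snoc_castSucc]

lemma wvec_decomp (x : Fin n → ℝ) :
    wvec x = wvec 0 + (Fin.cons 0 (Fin.snoc x 0) : Fin (n + 2) → ℝ) := by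
  funext j
  refine Fin.cases ?_ (fun k => ?_) j
  · show (0 : ℝ) = 0 + 0
    norm_num
  · refine Fin.lastCases ?_ (fun c => ?_) k
    · rw [Fin.succ_last, Pi.add_apply, wvec_last, wvec_last, iota_last, add_zero]
    · rw [Fin.succ_castSucc, show c.succ.castSucc = emb n c from rfl, Pi.add_apply,
        wvec_emb, wvec_emb, iota_emb, Pi.zero_apply, zero_add]

lemma mulVec_iota (E : Matrix (Fin (n + 2)) (Fin (n + 2)) ℝ) (x : Fin n → ℝ) (i : Fin n) :
    E.mulVec (Fin.cons 0 (Fin.snoc x 0)) (emb n i)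
      = (E.submatrix (emb n) (emb n)).mulVec x i := by
  show ∑ c, E (emb n i) c * (Fin.cons 0 (Fin.snoc x 0) : Fin (n + 2) → ℝ) c
      = ∑ j, E (emb n i) (emb n j) * x j
  rw [sum_boundary_zero _ (by rw [iota_zero, mul_zero]) (by rw [iota_last, mul_zero])]
  exact Finset.sum_congr rfl fun c _ => by rw [iota_emb]

lemma flowMap_affine (t : ℝ) (x : Fin n → ℝ) :
    flowMap n t x = (Matrix.toLin'
        ((NormedSpace.exp (t • coarseningMatrix n)).submatrix (emb n) (emb n))) x
      + flowMap n t 0 := by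
  funext i
  show (NormedSpace.exp (t • coarseningMatrix n)).mulVec (wvec x) (emb n i)
      = ((Matrix.toLin'
          ((NormedSpace.exp (t • coarseningMatrix n)).submatrix (emb n) (emb n))) x
        + flowMap n t 0) i
  rw [Pi.add_apply, wvec_decomp, Matrix.mulVec_add, Pi.add_apply, mulVec_iota,
    Matrix.toLin'_apply, add_comm]
  rfl

end CoarsenAux

open CoarsenAux

/-- The set of configurations that stay in the simplex up to time `t` and land in `B`
at time `t` has normalized-Lebesgue measure `e^{-2nt} μ_n(B)`. -/
theorem finite_invariance (n : ℕ) (t : ℝ) (ht : 0 < t)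
    (B : Set (Fin n → ℝ)) (hBm : MeasurableSet B) (hB : B ⊆ freeSimplex n) :
    ((n.factorial : ℝ≥0∞) • (volume : Measure (Fin n → ℝ)))
        {x ∈ freeSimplex n |
          (∀ s ∈ Set.Icc (0 : ℝ) t, flowMap n s x ∈ freeSimplex n) ∧ flowMap n t x ∈ B}
      = ENNReal.ofReal (Real.exp (-2 * n * t)) *
          ((n.factorial : ℝ≥0∞) • (volume : Measure (Fin n → ℝ))) B := by
  have hset : {x ∈ freeSimplex n |
      (∀ s ∈ Set.Icc (0 : ℝ) t, flowMap n s x ∈ freeSimplex n) ∧ flowMap n t x ∈ B}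
      = flowMap n t ⁻¹' B := by
    ext x
    simp only [Set.mem_setOf_eq, Set.mem_preimage]
    constructor
    · rintro ⟨-, -, h⟩; exact h
    · intro hx
      have hs : ∀ s ∈ Set.Icc (0 : ℝ) t, flowMap n s x ∈ freeSimplex n :=
        fun s hsmem => flow_mem_simplex x (hB hx) hsmem.1 hsmem.2
      refine ⟨?_, hs, hx⟩
      have h0 := hs 0 ⟨le_refl 0, ht.le⟩
      rwa [flowMap_zero] at h0
  set M := (NormedSpace.exp (t • coarseningMatrix n)).submatrix (emb n) (emb n) with hM
  have hMexp : M = NormedSpace.exp ((t • coarseningMatrix n).submatrix (emb n) (emb n)) :=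
    exp_submatrix (smul_L_row_zero t) (smul_L_row_last t)
  have hdet : M.det = Real.exp (2 * n * t) := by
    rw [hMexp, det_exp_of_isHermitian (A'_herm t), trace_A']
  have hdet' : LinearMap.det (Matrix.toLin' M) ≠ 0 := by
    rw [LinearMap.det_toLin', hdet]
    positivity
  have hpre : flowMap n t ⁻¹' B
      = Matrix.toLin' M ⁻¹' ((fun y => y + flowMap n t 0) ⁻¹' B) := by
    ext x
    simp only [Set.mem_preimage]
    rw [flowMap_affine t x]
  have hvol : volume (flowMap n t ⁻¹' B)
      = ENNReal.ofReal (Real.exp (-2 * n * t)) * volume B := by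
    rw [hpre, MeasureTheory.Measure.addHaar_preimage_linearMap volume hdet',
      measure_preimage_add_right, LinearMap.det_toLin', hdet]
    congr 2
    rw [abs_of_pos (by positivity), ← Real.exp_neg]
    ring_nf
  rw [hset, Measure.smul_apply, Measure.smul_apply, smul_eq_mul, smul_eq_mul, hvol]
  ring
end
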